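/- For every n ≥ 5 there exists a family of Θ(4ⁿ/n) lines in general position in the plane (specifically, of size C(2k-2, k-1)² when n = 2k+2) that contains no n lines in convex position. -/

import Mathlib

open Set

/-- A non-vertical line in the plane represented by (slope, intercept). -/
def lineSet (l : ℝ × ℝ) : Set (ℝ × ℝ) := {p | p.2 = l.1 * p.1 + l.2}

/-- General position: pairwise distinct slopes (hence no two parallel, none vertical
by the representation) and no three concurrent. -/
def GenPos (F : Finset (ℝ × ℝ)) : Prop :=
  (∀ l₁ ∈ F, ∀ l₂ ∈ F, l₁ ≠ l₂ → l₁.1 ≠ l₂.1) ∧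
  (∀ l₁ ∈ F, ∀ l₂ ∈ F, ∀ l₃ ∈ F, l₁ ≠ l₂ → l₁ ≠ l₃ → l₂ ≠ l₃ →
    ¬ ∃ p, p ∈ lineSet l₁ ∧ p ∈ lineSet l₂ ∧ p ∈ lineSet l₃)

/-- Intersection point of two non-parallel lines. -/
noncomputable def interPt (l₁ l₂ : ℝ × ℝ) : ℝ × ℝ :=
  ((l₂.2 - l₁.2) / (l₁.1 - l₂.1),
   l₁.1 * ((l₂.2 - l₁.2) / (l₁.1 - l₂.1)) + l₁.2)

/-- The point `p` lies strictly below the line `l` (the line is strictly above `p`). -/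
def Below (p : ℝ × ℝ) (l : ℝ × ℝ) : Prop := p.2 < l.1 * p.1 + l.2

/-- The point `p` lies strictly above the line `l` (the line is strictly below `p`). -/
def Above (p : ℝ × ℝ) (l : ℝ × ℝ) : Prop := p.2 > l.1 * p.1 + l.2

/-- A sequence of lines ordered by strictly increasing slope forms a cup: each
intermediate line lies strictly above the intersection of its two neighbours. -/
def IsCup {k : ℕ} (a : Fin k → ℝ × ℝ) : Prop :=
  StrictMono (fun i => (a i).1) ∧
  ∀ i : Fin k, ∀ _h1 : 0 < (i : ℕ), ∀ h2 : (i : ℕ) + 1 < k,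
    Below (interPt (a ⟨(i : ℕ) - 1, by omega⟩) (a ⟨(i : ℕ) + 1, h2⟩)) (a i)

/-- A sequence of lines ordered by strictly increasing slope forms a cap: each
intermediate line lies strictly below the intersection of its two neighbours. -/
def IsCap {k : ℕ} (a : Fin k → ℝ × ℝ) : Prop :=
  StrictMono (fun i => (a i).1) ∧
  ∀ i : Fin k, ∀ _h1 : 0 < (i : ℕ), ∀ h2 : (i : ℕ) + 1 < k,
    Above (interPt (a ⟨(i : ℕ) - 1, by omega⟩) (a ⟨(i : ℕ) + 1, h2⟩)) (a i)

/-- `F` contains `k` lines forming a `k`-cup. -/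
def HasCup (k : ℕ) (F : Finset (ℝ × ℝ)) : Prop :=
  ∃ a : Fin k → ℝ × ℝ, (∀ i, a i ∈ F) ∧ IsCup a

/-- `F` contains `l` lines forming an `l`-cap. -/
def HasCap (l : ℕ) (F : Finset (ℝ × ℝ)) : Prop :=
  ∃ a : Fin l → ℝ × ℝ, (∀ i, a i ∈ F) ∧ IsCap a

/-- Union of the lines of a family. -/
def linesUnion (F : Finset (ℝ × ℝ)) : Set (ℝ × ℝ) := ⋃ l ∈ F, lineSet l

/-- `P` is a cell of the arrangement of `F`: a connected component of the
complement of the union of the lines. -/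
def IsCellOf (F : Finset (ℝ × ℝ)) (P : Set (ℝ × ℝ)) : Prop :=
  ∃ p ∈ (linesUnion F)ᶜ, P = connectedComponentIn (linesUnion F)ᶜ p

/-- The line `l` contributes a (positive length) segment to the boundary of `P`:
the closure of `P` meets `l` in more than one point. -/
def Contributes (l : ℝ × ℝ) (P : Set (ℝ × ℝ)) : Prop :=
  ∃ p q : ℝ × ℝ, p ≠ q ∧ p ∈ closure P ∩ lineSet l ∧ q ∈ closure P ∩ lineSet l

/-- `P` is a cell of the arrangement of `F` with a boundary segment on every line of `F`. -/
def IsNCell (F : Finset (ℝ × ℝ)) (P : Set (ℝ × ℝ)) : Prop :=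
  IsCellOf F P ∧ ∀ l ∈ F, Contributes l P

/-- The lines of `F` are in convex position: they define a cell bounded by all of them. -/
def ConvexPos (F : Finset (ℝ × ℝ)) : Prop := ∃ P, IsNCell F P

namespace S12

open Classical Filter

noncomputable section

abbrev Ln := ℝ × ℝ
def xcr (l m : Ln) : ℝ := (m.2 - l.2) / (l.1 - m.1)

lemma xcr_comm (l m : Ln) : xcr l m = xcr m l := by
  unfold xcr
  rw [show m.2 - l.2 = -(l.2 - m.2) by ring, show l.1 - m.1 = -(m.1 - l.1) by ring,
    neg_div_neg_eq]

def Lw (A B : Finset Ln) (l : Ln) : Finset Ln :=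
  A.filter (fun m => m.1 < l.1) ∪ B.filter (fun m => l.1 < m.1)
def Up (A B : Finset Ln) (l : Ln) : Finset Ln :=
  A.filter (fun m => l.1 < m.1) ∪ B.filter (fun m => m.1 < l.1)
def Flag (A B : Finset Ln) : Prop :=
  ∀ l ∈ A ∪ B, ∀ m₁ ∈ Lw A B l, ∀ m₂ ∈ Up A B l, xcr l m₁ < xcr l m₂
def Cup3 (S : Finset Ln) : Prop :=
  ∀ a ∈ S, ∀ b ∈ S, ∀ c ∈ S, a.1 < b.1 → b.1 < c.1 → xcr a b < xcr b c
def Cap3 (S : Finset Ln) : Prop :=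
  ∀ a ∈ S, ∀ b ∈ S, ∀ c ∈ S, a.1 < b.1 → b.1 < c.1 → xcr b c < xcr a b
def SlopeSep (A B : Finset Ln) : Prop := ∀ a ∈ A, ∀ b ∈ B, a.1 < b.1
def NoRU (F : Finset Ln) : Prop :=
  ∀ A B : Finset Ln, A ⊆ F → B ⊆ F → A.Nonempty → B.Nonempty → Disjoint A B →
    SlopeSep A B → Flag A B → (A ∪ B).card ≤ 3
def NoLU (F : Finset Ln) : Prop :=
  ∀ A B : Finset Ln, A ⊆ F → B ⊆ F → A.Nonempty → B.Nonempty → Disjoint A B →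
    SlopeSep B A → Flag A B → (A ∪ B).card ≤ 3
def SlopeInj (F : Finset Ln) : Prop := ∀ l ∈ F, ∀ m ∈ F, l ≠ m → l.1 ≠ m.1
def NoConc (F : Finset Ln) : Prop :=
  ∀ l ∈ F, ∀ m ∈ F, ∀ m' ∈ F, l ≠ m → l ≠ m' → m ≠ m' → xcr l m ≠ xcr l m'

structure GoodCfg (a b : ℕ) (F : Finset Ln) : Prop where
  card : F.card = Nat.choose (a + b - 2) (a - 1)
  inj : SlopeInj F
  noconc : NoConc F
  nocup : ∀ S ⊆ F, Cup3 S → S.card ≤ a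
  nocap : ∀ S ⊆ F, Cap3 S → S.card ≤ b
  noru : NoRU F

/-! ### Transport under slope-monotone, crossing-shifting bijections -/

section Transport
variable (φ : Ln → Ln) (c : ℝ)
variable (hφ : Function.Injective φ)
variable (hmono : ∀ l m : Ln, l.1 < m.1 ↔ (φ l).1 < (φ m).1)
variable (hx : ∀ l m : Ln, l.1 ≠ m.1 → xcr (φ l) (φ m) = xcr l m + c)

include hmono in
lemma slope_ne_transport {l m : Ln} (h : l.1 ≠ m.1) : (φ l).1 ≠ (φ m).1 := by
  rcases lt_or_gt_of_ne h with h' | h'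
  · exact ne_of_lt ((hmono _ _).mp h')
  · exact ne_of_gt ((hmono _ _).mp h')

include hmono in
lemma lw_image (A B : Finset Ln) (l : Ln) :
    Lw (A.image φ) (B.image φ) (φ l) = (Lw A B l).image φ := by
  ext m'
  simp only [Lw, Finset.mem_union, Finset.mem_filter, Finset.mem_image]
  constructor
  · rintro (⟨⟨m, hm, rfl⟩, hs⟩ | ⟨⟨m, hm, rfl⟩, hs⟩)
    · exact ⟨m, Or.inl ⟨hm, (hmono _ _).mpr hs⟩, rfl⟩
    · exact ⟨m, Or.inr ⟨hm, (hmono _ _).mpr hs⟩, rfl⟩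
  · rintro ⟨m, (⟨hm, hs⟩ | ⟨hm, hs⟩), rfl⟩
    · exact Or.inl ⟨⟨m, hm, rfl⟩, (hmono _ _).mp hs⟩
    · exact Or.inr ⟨⟨m, hm, rfl⟩, (hmono _ _).mp hs⟩

include hmono in
lemma up_image (A B : Finset Ln) (l : Ln) :
    Up (A.image φ) (B.image φ) (φ l) = (Up A B l).image φ := by
  ext m'
  simp only [Up, Finset.mem_union, Finset.mem_filter, Finset.mem_image]
  constructor
  · rintro (⟨⟨m, hm, rfl⟩, hs⟩ | ⟨⟨m, hm, rfl⟩, hs⟩)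
    · exact ⟨m, Or.inl ⟨hm, (hmono _ _).mpr hs⟩, rfl⟩
    · exact ⟨m, Or.inr ⟨hm, (hmono _ _).mpr hs⟩, rfl⟩
  · rintro ⟨m, (⟨hm, hs⟩ | ⟨hm, hs⟩), rfl⟩
    · exact Or.inl ⟨⟨m, hm, rfl⟩, (hmono _ _).mp hs⟩
    · exact Or.inr ⟨⟨m, hm, rfl⟩, (hmono _ _).mp hs⟩

include hmono hx in
lemma flag_image_iff (A B : Finset Ln) :
    Flag (A.image φ) (B.image φ) ↔ Flag A B := by
  have hLwslope : ∀ (l m : Ln), m ∈ Lw A B l → m.1 ≠ l.1 := by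
    intro l m hm
    rcases Finset.mem_union.mp hm with h | h
    · exact ne_of_lt (Finset.mem_filter.mp h).2
    · exact ne_of_gt (Finset.mem_filter.mp h).2
  have hUpslope : ∀ (l m : Ln), m ∈ Up A B l → m.1 ≠ l.1 := by
    intro l m hm
    rcases Finset.mem_union.mp hm with h | h
    · exact ne_of_gt (Finset.mem_filter.mp h).2
    · exact ne_of_lt (Finset.mem_filter.mp h).2
  constructor
  · intro H l hl m₁ hm₁ m₂ hm₂
    have := H (φ l) (by rw [← Finset.image_union]; exact Finset.mem_image_of_mem φ hl)
      (φ m₁) (by rw [lw_image φ hmono]; exact Finset.mem_image_of_mem φ hm₁)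
      (φ m₂) (by rw [up_image φ hmono]; exact Finset.mem_image_of_mem φ hm₂)
    rw [hx l m₁ (hLwslope l m₁ hm₁).symm, hx l m₂ (hUpslope l m₂ hm₂).symm] at this
    linarith
  · intro H l' hl' m₁' hm₁' m₂' hm₂'
    rw [← Finset.image_union] at hl'
    obtain ⟨l, hl, rfl⟩ := Finset.mem_image.mp hl'
    rw [lw_image φ hmono] at hm₁'
    obtain ⟨m₁, hm₁, rfl⟩ := Finset.mem_image.mp hm₁'
    rw [up_image φ hmono] at hm₂'
    obtain ⟨m₂, hm₂, rfl⟩ := Finset.mem_image.mp hm₂'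
    rw [hx l m₁ (hLwslope l m₁ hm₁).symm, hx l m₂ (hUpslope l m₂ hm₂).symm]
    have := H l hl m₁ hm₁ m₂ hm₂
    linarith

include hφ hmono hx in
lemma goodcfg_transport {a b : ℕ} {F : Finset Ln} (h : GoodCfg a b F) :
    GoodCfg a b (F.image φ) := by
  have hpre : ∀ S : Finset Ln, S ⊆ F.image φ → (S.preimage φ hφ.injOn).image φ = S := by
    intro S hS
    ext s
    simp only [Finset.mem_image, Finset.mem_preimage]
    constructor
    · rintro ⟨m, hm, rfl⟩; exact hm
    · intro hs
      obtain ⟨l, _, rfl⟩ := Finset.mem_image.mp (hS hs)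
      exact ⟨l, hs, rfl⟩
  have hprecard : ∀ S : Finset Ln, S ⊆ F.image φ → (S.preimage φ hφ.injOn).card = S.card := by
    intro S hS
    conv_rhs => rw [← hpre S hS]
    rw [Finset.card_image_of_injective _ hφ]
  have hpresub : ∀ S : Finset Ln, S ⊆ F.image φ → S.preimage φ hφ.injOn ⊆ F := by
    intro S hS l hl
    rw [Finset.mem_preimage] at hl
    obtain ⟨m, hm, hlm⟩ := Finset.mem_image.mp (hS hl)
    rwa [← hφ hlm]
  refine ⟨?_, ?_, ?_, ?_, ?_, ?_⟩
  · rw [Finset.card_image_of_injective _ hφ]; exact h.card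
  · intro l' hl' m' hm' hne
    obtain ⟨l, hl, rfl⟩ := Finset.mem_image.mp hl'
    obtain ⟨m, hm, rfl⟩ := Finset.mem_image.mp hm'
    exact slope_ne_transport φ hmono (h.inj l hl m hm (fun hh => hne (by rw [hh])))
  · intro l' hl' m' hm' n' hn' h1 h2 h3
    obtain ⟨l, hl, rfl⟩ := Finset.mem_image.mp hl'
    obtain ⟨m, hm, rfl⟩ := Finset.mem_image.mp hm'
    obtain ⟨n, hn, rfl⟩ := Finset.mem_image.mp hn'
    have hlm : l ≠ m := fun hh => h1 (by rw [hh])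
    have hln : l ≠ n := fun hh => h2 (by rw [hh])
    have hmn : m ≠ n := fun hh => h3 (by rw [hh])
    rw [hx l m (h.inj l hl m hm hlm), hx l n (h.inj l hl n hn hln)]
    intro heq
    exact h.noconc l hl m hm n hn hlm hln hmn (by linarith)
  · intro S hS hcup
    rw [← hprecard S hS]
    apply h.nocup _ (hpresub S hS)
    intro p hp q hq r hr h1 h2
    rw [Finset.mem_preimage] at hp hq hr
    have := hcup _ hp _ hq _ hr ((hmono _ _).mp h1) ((hmono _ _).mp h2)
    rw [hx p q (ne_of_lt h1), hx q r (ne_of_lt h2)] at this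
    linarith
  · intro S hS hcap
    rw [← hprecard S hS]
    apply h.nocap _ (hpresub S hS)
    intro p hp q hq r hr h1 h2
    rw [Finset.mem_preimage] at hp hq hr
    have := hcap _ hp _ hq _ hr ((hmono _ _).mp h1) ((hmono _ _).mp h2)
    rw [hx p q (ne_of_lt h1), hx q r (ne_of_lt h2)] at this
    linarith
  · intro A B hA hB hAne hBne hdisj hsep hflag
    set A₀ := A.preimage φ hφ.injOn with hA₀
    set B₀ := B.preimage φ hφ.injOn with hB₀
    have hAim : A₀.image φ = A := hpre A hA
    have hBim : B₀.image φ = B := hpre B hB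
    have := h.noru A₀ B₀ (hpresub A hA) (hpresub B hB)
      (by rwa [← hAim, Finset.image_nonempty] at hAne)
      (by rwa [← hBim, Finset.image_nonempty] at hBne)
      (by
        rw [Finset.disjoint_left]
        intro l hl hl'
        rw [hA₀, Finset.mem_preimage] at hl
        rw [hB₀, Finset.mem_preimage] at hl'
        exact (Finset.disjoint_left.mp hdisj) hl hl')
      (by
        intro p hp q hq
        rw [hA₀, Finset.mem_preimage] at hp
        rw [hB₀, Finset.mem_preimage] at hq
        exact (hmono _ _).mpr (hsep _ hp _ hq))
      (by
        rw [← flag_image_iff φ c hmono hx, hAim, hBim]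
        exact hflag)
    calc (A ∪ B).card = ((A₀ ∪ B₀).image φ).card := by rw [Finset.image_union, hAim, hBim]
      _ = (A₀ ∪ B₀).card := Finset.card_image_of_injective _ hφ
      _ ≤ 3 := this

end Transport

/-! ### Mirror -/


def mir (l : Ln) : Ln := (-l.1, l.2)

lemma mir_inj : Function.Injective mir := by
  intro l m h
  simp only [mir, Prod.mk.injEq] at h
  exact Prod.ext (by linarith [h.1]) h.2

lemma mir_slope (l m : Ln) : l.1 < m.1 ↔ (mir m).1 < (mir l).1 := by
  simp only [mir]; constructor <;> intro <;> linarith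

lemma mir_xcr (l m : Ln) : xcr (mir l) (mir m) = - xcr l m := by
  simp only [mir, xcr]
  rw [show -l.1 - -m.1 = -(l.1 - m.1) by ring, div_neg]

lemma lw_mir (A B : Finset Ln) (l : Ln) :
    Lw (A.image mir) (B.image mir) (mir l) = (Up A B l).image mir := by
  ext m'
  simp only [Lw, Up, Finset.mem_union, Finset.mem_filter, Finset.mem_image]
  constructor
  · rintro (⟨⟨m, hm, rfl⟩, hs⟩ | ⟨⟨m, hm, rfl⟩, hs⟩)
    · exact ⟨m, Or.inl ⟨hm, (mir_slope l m).mpr hs⟩, rfl⟩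
    · exact ⟨m, Or.inr ⟨hm, (mir_slope m l).mpr hs⟩, rfl⟩
  · rintro ⟨m, (⟨hm, hs⟩ | ⟨hm, hs⟩), rfl⟩
    · exact Or.inl ⟨⟨m, hm, rfl⟩, (mir_slope l m).mp hs⟩
    · exact Or.inr ⟨⟨m, hm, rfl⟩, (mir_slope m l).mp hs⟩

lemma up_mir (A B : Finset Ln) (l : Ln) :
    Up (A.image mir) (B.image mir) (mir l) = (Lw A B l).image mir := by
  ext m'
  simp only [Lw, Up, Finset.mem_union, Finset.mem_filter, Finset.mem_image]
  constructor
  · rintro (⟨⟨m, hm, rfl⟩, hs⟩ | ⟨⟨m, hm, rfl⟩, hs⟩)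
    · exact ⟨m, Or.inl ⟨hm, (mir_slope m l).mpr hs⟩, rfl⟩
    · exact ⟨m, Or.inr ⟨hm, (mir_slope l m).mpr hs⟩, rfl⟩
  · rintro ⟨m, (⟨hm, hs⟩ | ⟨hm, hs⟩), rfl⟩
    · exact Or.inl ⟨⟨m, hm, rfl⟩, (mir_slope m l).mp hs⟩
    · exact Or.inr ⟨⟨m, hm, rfl⟩, (mir_slope l m).mp hs⟩

lemma flag_mir_iff (A B : Finset Ln) :
    Flag (A.image mir) (B.image mir) ↔ Flag A B := by
  constructor
  · intro H l hl m₁ hm₁ m₂ hm₂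
    have := H (mir l) (by rw [← Finset.image_union]; exact Finset.mem_image_of_mem mir hl)
      (mir m₂) (by rw [lw_mir]; exact Finset.mem_image_of_mem mir hm₂)
      (mir m₁) (by rw [up_mir]; exact Finset.mem_image_of_mem mir hm₁)
    rw [mir_xcr, mir_xcr] at this
    linarith
  · intro H l' hl' m₁' hm₁' m₂' hm₂'
    rw [← Finset.image_union] at hl'
    obtain ⟨l, hl, rfl⟩ := Finset.mem_image.mp hl'
    rw [lw_mir] at hm₁'
    obtain ⟨m₁, hm₁, rfl⟩ := Finset.mem_image.mp hm₁'
    rw [up_mir] at hm₂'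
    obtain ⟨m₂, hm₂, rfl⟩ := Finset.mem_image.mp hm₂'
    rw [mir_xcr, mir_xcr]
    have := H l hl m₂ hm₂ m₁ hm₁
    linarith

/-- inner family requirements -/
structure InnerCfg (k : ℕ) (F : Finset Ln) : Prop where
  card : F.card = Nat.choose (2 * k - 2) (k - 1)
  inj : SlopeInj F
  noconc : NoConc F
  nocup : ∀ S ⊆ F, Cup3 S → S.card ≤ k
  nocap : ∀ S ⊆ F, Cap3 S → S.card ≤ k
  nolu : NoLU F

lemma inner_of_good {k : ℕ} {F : Finset Ln} (h : GoodCfg k k F) :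
    InnerCfg k (F.image mir) := by
  have hpre : ∀ S : Finset Ln, S ⊆ F.image mir → (S.preimage mir mir_inj.injOn).image mir = S := by
    intro S hS
    ext s
    simp only [Finset.mem_image, Finset.mem_preimage]
    constructor
    · rintro ⟨m, hm, rfl⟩; exact hm
    · intro hs
      obtain ⟨l, _, rfl⟩ := Finset.mem_image.mp (hS hs)
      exact ⟨l, hs, rfl⟩
  have hprecard : ∀ S : Finset Ln, S ⊆ F.image mir →
      (S.preimage mir mir_inj.injOn).card = S.card := by
    intro S hS
    conv_rhs => rw [← hpre S hS]
    rw [Finset.card_image_of_injective _ mir_inj]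
  have hpresub : ∀ S : Finset Ln, S ⊆ F.image mir → S.preimage mir mir_inj.injOn ⊆ F := by
    intro S hS l hl
    rw [Finset.mem_preimage] at hl
    obtain ⟨m, hm, hlm⟩ := Finset.mem_image.mp (hS hl)
    rwa [← mir_inj hlm]
  refine ⟨?_, ?_, ?_, ?_, ?_, ?_⟩
  · rw [Finset.card_image_of_injective _ mir_inj, h.card]
    congr 1 <;> omega
  · intro l' hl' m' hm' hne
    obtain ⟨l, hl, rfl⟩ := Finset.mem_image.mp hl'
    obtain ⟨m, hm, rfl⟩ := Finset.mem_image.mp hm'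
    have := h.inj l hl m hm (fun hh => hne (by rw [hh]))
    simp only [mir, ne_eq, neg_inj]
    exact this
  · intro l' hl' m' hm' n' hn' h1 h2 h3
    obtain ⟨l, hl, rfl⟩ := Finset.mem_image.mp hl'
    obtain ⟨m, hm, rfl⟩ := Finset.mem_image.mp hm'
    obtain ⟨n, hn, rfl⟩ := Finset.mem_image.mp hn'
    rw [mir_xcr, mir_xcr]
    intro heq
    exact h.noconc l hl m hm n hn (fun hh => h1 (by rw [hh])) (fun hh => h2 (by rw [hh]))
      (fun hh => h3 (by rw [hh])) (by linarith)
  · intro S hS hcup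
    rw [← hprecard S hS]
    apply h.nocup _ (hpresub S hS)
    intro p hp q hq r hr h1 h2
    rw [Finset.mem_preimage] at hp hq hr
    have := hcup _ hr _ hq _ hp ((mir_slope q r).mp h2) ((mir_slope p q).mp h1)
    rw [mir_xcr, mir_xcr] at this
    rw [xcr_comm p q, xcr_comm q r]
    linarith
  · intro S hS hcap
    rw [← hprecard S hS]
    apply h.nocap _ (hpresub S hS)
    intro p hp q hq r hr h1 h2
    rw [Finset.mem_preimage] at hp hq hr
    have := hcap _ hr _ hq _ hp ((mir_slope q r).mp h2) ((mir_slope p q).mp h1)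
    rw [mir_xcr, mir_xcr] at this
    rw [xcr_comm p q, xcr_comm q r]
    linarith
  · intro A B hA hB hAne hBne hdisj hsep hflag
    set A₀ := A.preimage mir mir_inj.injOn with hA₀
    set B₀ := B.preimage mir mir_inj.injOn with hB₀
    have hAim : A₀.image mir = A := hpre A hA
    have hBim : B₀.image mir = B := hpre B hB
    have := h.noru A₀ B₀ (hpresub A hA) (hpresub B hB)
      (by rwa [← hAim, Finset.image_nonempty] at hAne)
      (by rwa [← hBim, Finset.image_nonempty] at hBne)
      (by
        rw [Finset.disjoint_left]
        intro l hl hl'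
        rw [hA₀, Finset.mem_preimage] at hl
        rw [hB₀, Finset.mem_preimage] at hl'
        exact (Finset.disjoint_left.mp hdisj) hl hl')
      (by
        intro p hp q hq
        rw [hA₀, Finset.mem_preimage] at hp
        rw [hB₀, Finset.mem_preimage] at hq
        exact (mir_slope p q).mpr (hsep _ hq _ hp))
      (by rw [← flag_mir_iff, hAim, hBim]; exact hflag)
    calc (A ∪ B).card = ((A₀ ∪ B₀).image mir).card := by
          rw [Finset.image_union, hAim, hBim]
      _ = (A₀ ∪ B₀).card := Finset.card_image_of_injective _ mir_inj
      _ ≤ 3 := this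


/-! ### The union step: L ∪ R with R far to the right -/

section UnionStep

variable {a b : ℕ} {L R : Finset Ln}

lemma cup3_mono {S T : Finset Ln} (h : Cup3 T) (hs : S ⊆ T) : Cup3 S :=
  fun x hx y hy z hz h1 h2 => h x (hs hx) y (hs hy) z (hs hz) h1 h2

lemma cap3_mono {S T : Finset Ln} (h : Cap3 T) (hs : S ⊆ T) : Cap3 S :=
  fun x hx y hy z hz h1 h2 => h x (hs hx) y (hs hy) z (hs hz) h1 h2

lemma union_good (ha : 2 ≤ a) (hb : 2 ≤ b)
    (hL : GoodCfg (a - 1) b L) (hR : GoodCfg a (b - 1) R)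
    (hsl : ∀ u ∈ L, ∀ r ∈ R, u.1 < r.1)
    (hbigL : ∀ u ∈ L, ∀ r ∈ R, ∀ w ∈ L, ∀ w' ∈ L, w ≠ w' → xcr w w' < xcr u r)
    (hbigR : ∀ u ∈ L, ∀ r ∈ R, ∀ w ∈ R, ∀ w' ∈ R, w ≠ w' → xcr w w' < xcr u r)
    (hQ3 : ∀ u ∈ L, ∀ r ∈ R, ∀ r' ∈ R, r.1 < r'.1 → xcr u r' < xcr u r)
    (hQ4 : ∀ u ∈ L, ∀ u' ∈ L, ∀ r ∈ R, u.1 < u'.1 → xcr u r < xcr u' r) :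
    GoodCfg a b (L ∪ R) := by
  have hdLR : Disjoint L R := by
    rw [Finset.disjoint_left]
    intro x hxL hxR
    exact absurd (hsl x hxL x hxR) (lt_irrefl _)
  have hinjU : SlopeInj (L ∪ R) := by
    intro l hl m hm hne
    rcases Finset.mem_union.mp hl with h1 | h1 <;> rcases Finset.mem_union.mp hm with h2 | h2
    · exact hL.inj l h1 m h2 hne
    · exact ne_of_lt (hsl l h1 m h2)
    · exact ne_of_gt (hsl m h2 l h1)
    · exact hR.inj l h1 m h2 hne
  refine ⟨?_, hinjU, ?_, ?_, ?_, ?_⟩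
  · -- cardinality
    rw [Finset.card_union_of_disjoint hdLR, hL.card, hR.card]
    obtain ⟨a', rfl⟩ : ∃ a', a = a' + 2 := ⟨a - 2, by omega⟩
    obtain ⟨b', rfl⟩ : ∃ b', b = b' + 2 := ⟨b - 2, by omega⟩
    have e1 : a' + 2 - 1 + (b' + 2) - 2 = a' + b' + 1 := by omega
    have e2 : a' + 2 - 1 - 1 = a' := by omega
    have e3 : a' + 2 + (b' + 2 - 1) - 2 = a' + b' + 1 := by omega
    have e4 : a' + 2 + (b' + 2) - 2 = a' + b' + 1 + 1 := by omega
    have e5 : a' + 2 - 1 = a' + 1 := by omega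
    rw [e1, e2, e3, e4, e5]
    exact (Nat.choose_succ_succ _ _).symm
  · -- no three concurrent
    intro l hl m hm m' hm' h1 h2 h3
    rcases Finset.mem_union.mp hl with hlm | hlm <;>
      rcases Finset.mem_union.mp hm with hmm | hmm <;>
      rcases Finset.mem_union.mp hm' with hmm' | hmm'
    · exact hL.noconc l hlm m hmm m' hmm' h1 h2 h3
    · exact ne_of_lt (hbigL l hlm m' hmm' l hlm m hmm h1)
    · exact ne_of_gt (hbigL l hlm m hmm l hlm m' hmm' h2)
    · -- l ∈ L, m m' ∈ R
      have hs : m.1 ≠ m'.1 := hR.inj m hmm m' hmm' h3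
      rcases lt_or_gt_of_ne hs with ho | ho
      · exact ne_of_gt (hQ3 l hlm m hmm m' hmm' ho)
      · exact ne_of_lt (hQ3 l hlm m' hmm' m hmm ho)
    · -- l ∈ R, m m' ∈ L
      have hs : m.1 ≠ m'.1 := hL.inj m hmm m' hmm' h3
      rw [xcr_comm l m, xcr_comm l m']
      rcases lt_or_gt_of_ne hs with ho | ho
      · exact ne_of_lt (hQ4 m hmm m' hmm' l hlm ho)
      · exact ne_of_gt (hQ4 m' hmm' m hmm l hlm ho)
    · -- l ∈ R, m ∈ L, m' ∈ R
      rw [xcr_comm l m]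
      exact ne_of_gt (hbigR m hmm l hlm l hlm m' hmm' h2)
    · -- l ∈ R, m ∈ R, m' ∈ L
      rw [xcr_comm l m']
      exact ne_of_lt (hbigR m' hmm' l hlm l hlm m hmm h1)
    · exact hR.noconc l hlm m hmm m' hmm' h1 h2 h3
  · -- no (a+1)-cup
    intro S hS hcup
    set SL := S ∩ L with hSL
    set SR := S ∩ R with hSR
    have hSeq : S = SL ∪ SR := by
      ext s
      simp only [hSL, hSR, Finset.mem_union, Finset.mem_inter]
      constructor
      · intro hs
        rcases Finset.mem_union.mp (hS hs) with h | h
        · exact Or.inl ⟨hs, h⟩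
        · exact Or.inr ⟨hs, h⟩
      · rintro (⟨hs, _⟩ | ⟨hs, _⟩) <;> exact hs
    by_cases hSLe : SL.Nonempty
    · have hSR1 : SR.card ≤ 1 := by
        by_contra hc
        obtain ⟨r, hr, r', hr', hrr⟩ := Finset.one_lt_card.mp (not_le.mp hc)
        obtain ⟨u, hu⟩ := hSLe
        have hrR : r ∈ R := (Finset.mem_inter.mp hr).2
        have hrR' : r' ∈ R := (Finset.mem_inter.mp hr').2
        have huL : u ∈ L := (Finset.mem_inter.mp hu).2
        have hrS : r ∈ S := (Finset.mem_inter.mp hr).1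
        have hrS' : r' ∈ S := (Finset.mem_inter.mp hr').1
        have huS : u ∈ S := (Finset.mem_inter.mp hu).1
        rcases lt_or_gt_of_ne (hR.inj r hrR r' hrR' hrr) with ho | ho
        · exact absurd (hcup u huS r hrS r' hrS' (hsl u huL r hrR) ho)
            (not_lt.mpr (le_of_lt (hbigR u huL r hrR r hrR r' hrR' hrr)))
        · exact absurd (hcup u huS r' hrS' r hrS (hsl u huL r' hrR') ho)
            (not_lt.mpr (le_of_lt (hbigR u huL r' hrR' r' hrR' r hrR (fun hh => hrr hh.symm))))
      have hSLa : SL.card ≤ a - 1 :=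
        hL.nocup SL (by intro x hx; exact (Finset.mem_inter.mp hx).2)
          (cup3_mono hcup (by intro x hx; exact (Finset.mem_inter.mp hx).1))
      calc S.card = (SL ∪ SR).card := by rw [← hSeq]
        _ ≤ SL.card + SR.card := Finset.card_union_le _ _
        _ ≤ a := by omega
    · have : S = SR := by
        rw [hSeq, Finset.not_nonempty_iff_eq_empty.mp hSLe, Finset.empty_union]
      rw [this]
      exact hR.nocup SR (by intro x hx; exact (Finset.mem_inter.mp hx).2)
        (cup3_mono hcup (by rw [hSeq]; exact Finset.subset_union_right))
  · -- no (b+1)-cap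
    intro S hS hcap
    set SL := S ∩ L with hSL
    set SR := S ∩ R with hSR
    have hSeq : S = SL ∪ SR := by
      ext s
      simp only [hSL, hSR, Finset.mem_union, Finset.mem_inter]
      constructor
      · intro hs
        rcases Finset.mem_union.mp (hS hs) with h | h
        · exact Or.inl ⟨hs, h⟩
        · exact Or.inr ⟨hs, h⟩
      · rintro (⟨hs, _⟩ | ⟨hs, _⟩) <;> exact hs
    by_cases hSRe : SR.Nonempty
    · have hSL1 : SL.card ≤ 1 := by
        by_contra hc
        obtain ⟨u, hu, u', hu', huu⟩ := Finset.one_lt_card.mp (not_le.mp hc)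
        obtain ⟨r, hr⟩ := hSRe
        have huL : u ∈ L := (Finset.mem_inter.mp hu).2
        have huL' : u' ∈ L := (Finset.mem_inter.mp hu').2
        have hrR : r ∈ R := (Finset.mem_inter.mp hr).2
        have huS : u ∈ S := (Finset.mem_inter.mp hu).1
        have huS' : u' ∈ S := (Finset.mem_inter.mp hu').1
        have hrS : r ∈ S := (Finset.mem_inter.mp hr).1
        rcases lt_or_gt_of_ne (hL.inj u huL u' huL' huu) with ho | ho
        · exact absurd (hcap u huS u' huS' r hrS ho (hsl u' huL' r hrR))
            (not_lt.mpr (le_of_lt (hbigL u' huL' r hrR u huL u' huL' huu)))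
        · exact absurd (hcap u' huS' u huS r hrS ho (hsl u huL r hrR))
            (not_lt.mpr (le_of_lt (hbigL u huL r hrR u' huL' u huL (fun hh => huu hh.symm))))
      have hSRb : SR.card ≤ b - 1 :=
        hR.nocap SR (by intro x hx; exact (Finset.mem_inter.mp hx).2)
          (cap3_mono hcap (by intro x hx; exact (Finset.mem_inter.mp hx).1))
      calc S.card = (SL ∪ SR).card := by rw [← hSeq]
        _ ≤ SL.card + SR.card := Finset.card_union_le _ _
        _ ≤ b := by omega
    · have : S = SL := by
        rw [hSeq, Finset.not_nonempty_iff_eq_empty.mp hSRe, Finset.union_empty]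
      rw [this]
      exact hL.nocap SL (by intro x hx; exact (Finset.mem_inter.mp hx).2)
        (cap3_mono hcap (by rw [hSeq]; exact Finset.subset_union_left))
  · -- NoRU
    intro A B hA hB hAne hBne hdisj hsep hflag
    classical
    set AL := A ∩ L with hAL
    set AR := A ∩ R with hAR
    set BL := B ∩ L with hBL
    set BR := B ∩ R with hBR
    have hAeq : A = AL ∪ AR := by
      ext s
      simp only [hAL, hAR, Finset.mem_union, Finset.mem_inter]
      constructor
      · intro hs
        rcases Finset.mem_union.mp (hA hs) with h | h
        · exact Or.inl ⟨hs, h⟩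
        · exact Or.inr ⟨hs, h⟩
      · rintro (⟨hs, _⟩ | ⟨hs, _⟩) <;> exact hs
    have hBeq : B = BL ∪ BR := by
      ext s
      simp only [hBL, hBR, Finset.mem_union, Finset.mem_inter]
      constructor
      · intro hs
        rcases Finset.mem_union.mp (hB hs) with h | h
        · exact Or.inl ⟨hs, h⟩
        · exact Or.inr ⟨hs, h⟩
      · rintro (⟨hs, _⟩ | ⟨hs, _⟩) <;> exact hs
    -- the kill tool : a cross lower constraint beats an internal upper constraint
    have K1 : ∀ l ∈ A ∪ B, ∀ m₁ ∈ Lw A B l, ∀ m₂ ∈ Up A B l,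
        ((l ∈ L ∧ m₁ ∈ R) ∨ (l ∈ R ∧ m₁ ∈ L)) →
        ((l ∈ L ∧ m₂ ∈ L) ∨ (l ∈ R ∧ m₂ ∈ R)) → False := by
      intro l hl m₁ hm₁ m₂ hm₂ hcross hsame
      have hne2 : l ≠ m₂ := by
        rcases Finset.mem_union.mp hm₂ with h | h
        · exact fun hh => absurd ((Finset.mem_filter.mp h).2) (by rw [← hh]; exact lt_irrefl _)
        · exact fun hh => absurd ((Finset.mem_filter.mp h).2) (by rw [← hh]; exact lt_irrefl _)
      have hflag1 := hflag l hl m₁ hm₁ m₂ hm₂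
      rcases hcross with ⟨hlL, hm₁R⟩ | ⟨hlR, hm₁L⟩
      · rcases hsame with ⟨_, hm₂L⟩ | ⟨hlR, _⟩
        · exact absurd hflag1 (not_lt.mpr (le_of_lt (hbigL l hlL m₁ hm₁R l hlL m₂ hm₂L hne2)))
        · exact absurd (hsl l hlL l hlR) (lt_irrefl _)
      · rcases hsame with ⟨hlL, _⟩ | ⟨_, hm₂R⟩
        · exact absurd (hsl l hlL l hlR) (lt_irrefl _)
        · have := hbigR m₁ hm₁L l hlR l hlR m₂ hm₂R hne2
          rw [xcr_comm m₁ l] at this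
          exact absurd hflag1 (not_lt.mpr (le_of_lt this))
    have hmemA : ∀ x ∈ A, x ∈ A ∪ B := fun x hx => Finset.mem_union_left _ hx
    have hmemB : ∀ x ∈ B, x ∈ A ∪ B := fun x hx => Finset.mem_union_right _ hx
    have hLwA : ∀ l, ∀ m ∈ A, m.1 < l.1 → m ∈ Lw A B l := fun l m hm hs =>
      Finset.mem_union_left _ (Finset.mem_filter.mpr ⟨hm, hs⟩)
    have hLwB : ∀ l, ∀ m ∈ B, l.1 < m.1 → m ∈ Lw A B l := fun l m hm hs =>
      Finset.mem_union_right _ (Finset.mem_filter.mpr ⟨hm, hs⟩)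
    have hUpA : ∀ l, ∀ m ∈ A, l.1 < m.1 → m ∈ Up A B l := fun l m hm hs =>
      Finset.mem_union_left _ (Finset.mem_filter.mpr ⟨hm, hs⟩)
    have hUpB : ∀ l, ∀ m ∈ B, m.1 < l.1 → m ∈ Up A B l := fun l m hm hs =>
      Finset.mem_union_right _ (Finset.mem_filter.mpr ⟨hm, hs⟩)
    have hALsub : AL ⊆ A := Finset.inter_subset_left
    have hARsub : AR ⊆ A := Finset.inter_subset_left
    have hBLsub : BL ⊆ B := Finset.inter_subset_left
    have hBRsub : BR ⊆ B := Finset.inter_subset_left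
    have hc1 : AR.Nonempty → BL = ∅ := by
      rintro ⟨r, hr⟩
      rw [Finset.eq_empty_iff_forall_notMem]
      intro v hv
      have h1 := hsep r (hARsub hr) v (hBLsub hv)
      have h2 := hsl v (Finset.mem_inter.mp hv).2 r (Finset.mem_inter.mp hr).2
      linarith
    have hc2 : BR.Nonempty → AL.card ≤ 1 := by
      rintro ⟨v, hv⟩
      by_contra hc
      obtain ⟨u, hu, u', hu', huu⟩ := Finset.one_lt_card.mp (not_le.mp hc)
      have huL : u ∈ L := (Finset.mem_inter.mp hu).2
      have huL' : u' ∈ L := (Finset.mem_inter.mp hu').2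
      have hvR : v ∈ R := (Finset.mem_inter.mp hv).2
      rcases lt_or_gt_of_ne (hL.inj u huL u' huL' huu) with ho | ho
      · exact K1 u (hmemA u (hALsub hu)) v (hLwB u v (hBRsub hv) (hsl u huL v hvR))
          u' (hUpA u u' (hALsub hu') ho) (Or.inl ⟨huL, hvR⟩) (Or.inl ⟨huL, huL'⟩)
      · exact K1 u' (hmemA u' (hALsub hu')) v (hLwB u' v (hBRsub hv) (hsl u' huL' v hvR))
          u (hUpA u' u (hALsub hu) ho) (Or.inl ⟨huL', hvR⟩) (Or.inl ⟨huL', huL⟩)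
    have hc5 : AL.Nonempty → AR.card ≤ 1 := by
      rintro ⟨u, hu⟩
      by_contra hc
      obtain ⟨r, hr, r', hr', hrr⟩ := Finset.one_lt_card.mp (not_le.mp hc)
      have hrR : r ∈ R := (Finset.mem_inter.mp hr).2
      have hrR' : r' ∈ R := (Finset.mem_inter.mp hr').2
      have huL : u ∈ L := (Finset.mem_inter.mp hu).2
      rcases lt_or_gt_of_ne (hR.inj r hrR r' hrR' hrr) with ho | ho
      · exact K1 r (hmemA r (hARsub hr)) u (hLwA r u (hALsub hu) (hsl u huL r hrR))
          r' (hUpA r r' (hARsub hr') ho) (Or.inr ⟨hrR, huL⟩) (Or.inr ⟨hrR, hrR'⟩)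
      · exact K1 r' (hmemA r' (hARsub hr')) u (hLwA r' u (hALsub hu) (hsl u huL r' hrR'))
          r (hUpA r' r (hARsub hr) ho) (Or.inr ⟨hrR', huL⟩) (Or.inr ⟨hrR', hrR⟩)
    have hc3 : AL.Nonempty → BR.card ≤ 1 := by
      rintro ⟨u, hu⟩
      by_contra hc
      obtain ⟨v, hv, v', hv', hvv⟩ := Finset.one_lt_card.mp (not_le.mp hc)
      have hvR : v ∈ R := (Finset.mem_inter.mp hv).2
      have hvR' : v' ∈ R := (Finset.mem_inter.mp hv').2
      have huL : u ∈ L := (Finset.mem_inter.mp hu).2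
      rcases lt_or_gt_of_ne (hR.inj v hvR v' hvR' hvv) with ho | ho
      · exact K1 v' (hmemB v' (hBRsub hv')) u (hLwA v' u (hALsub hu) (hsl u huL v' hvR'))
          v (hUpB v' v (hBRsub hv) ho) (Or.inr ⟨hvR', huL⟩) (Or.inr ⟨hvR', hvR⟩)
      · exact K1 v (hmemB v (hBRsub hv)) u (hLwA v u (hALsub hu) (hsl u huL v hvR))
          v' (hUpB v v' (hBRsub hv') ho) (Or.inr ⟨hvR, huL⟩) (Or.inr ⟨hvR, hvR'⟩)
    have hc4 : BR.Nonempty → BL.card ≤ 1 := by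
      rintro ⟨w, hw⟩
      by_contra hc
      obtain ⟨v, hv, v', hv', hvv⟩ := Finset.one_lt_card.mp (not_le.mp hc)
      have hvL : v ∈ L := (Finset.mem_inter.mp hv).2
      have hvL' : v' ∈ L := (Finset.mem_inter.mp hv').2
      have hwR : w ∈ R := (Finset.mem_inter.mp hw).2
      rcases lt_or_gt_of_ne (hL.inj v hvL v' hvL' hvv) with ho | ho
      · exact K1 v' (hmemB v' (hBLsub hv')) w (hLwB v' w (hBRsub hw) (hsl v' hvL' w hwR))
          v (hUpB v' v (hBLsub hv) ho) (Or.inl ⟨hvL', hwR⟩) (Or.inl ⟨hvL', hvL⟩)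
      · exact K1 v (hmemB v (hBLsub hv)) w (hLwB v w (hBRsub hw) (hsl v hvL w hwR))
          v' (hUpB v v' (hBLsub hv') ho) (Or.inl ⟨hvL, hwR⟩) (Or.inl ⟨hvL, hvL'⟩)
    have hcardA : A.card ≤ AL.card + AR.card := by
      conv_lhs => rw [hAeq]
      exact Finset.card_union_le _ _
    have hcardB : B.card ≤ BL.card + BR.card := by
      conv_lhs => rw [hBeq]
      exact Finset.card_union_le _ _
    have hcardAB : (A ∪ B).card ≤ A.card + B.card := Finset.card_union_le _ _
    by_cases hBRe : BR.Nonempty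
    · by_cases hALe : AL.Nonempty
      · have h1 := hc2 hBRe
        have h3 := hc3 hALe
        have h4 := hc4 hBRe
        by_cases hARe : AR.Nonempty
        · have hBL0 : BL.card = 0 := by rw [hc1 hARe]; exact Finset.card_empty
          have h2 := hc5 hALe
          omega
        · have hAR0 : AR.card = 0 := by
            rw [Finset.not_nonempty_iff_eq_empty.mp hARe]; exact Finset.card_empty
          omega
      · have hAReq : A = AR := by
          rw [hAeq, Finset.not_nonempty_iff_eq_empty.mp hALe, Finset.empty_union]
        have hARe : AR.Nonempty := by rwa [← hAReq]
        have hBL0 : BL = ∅ := hc1 hARe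
        have hAsubR : A ⊆ R := by
          intro x hx
          rw [hAReq] at hx
          exact (Finset.mem_inter.mp hx).2
        have hBsubR : B ⊆ R := by
          intro x hx
          rw [hBeq, hBL0, Finset.empty_union] at hx
          exact (Finset.mem_inter.mp hx).2
        exact hR.noru A B hAsubR hBsubR hAne hBne hdisj hsep hflag
    · have hBLeq : B = BL := by
        rw [hBeq, Finset.not_nonempty_iff_eq_empty.mp hBRe, Finset.union_empty]
      have hBLe : BL.Nonempty := by rwa [← hBLeq]
      have hAR0 : AR = ∅ := by
        by_contra hARne
        rw [hc1 (Finset.nonempty_iff_ne_empty.mpr hARne)] at hBLe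
        exact Finset.not_nonempty_empty hBLe
      have hAsubL : A ⊆ L := by
        intro x hx
        rw [hAeq, hAR0, Finset.union_empty] at hx
        exact (Finset.mem_inter.mp hx).2
      have hBsubL : B ⊆ L := by
        intro x hx
        rw [hBLeq] at hx
        exact (Finset.mem_inter.mp hx).2
      exact hL.noru A B hAsubL hBsubL hAne hBne hdisj hsep hflag

end UnionStep

/-! ### Far translation asymptotics, recursion step, existence -/

def trf (M : ℝ) (l : Ln) : Ln := (l.1 + M, l.2 - M^2)

lemma trf_inj (M : ℝ) : Function.Injective (trf M) := by
  intro l m h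
  simp only [trf, Prod.mk.injEq] at h
  exact Prod.ext (by linarith [h.1]) (by linarith [h.2])

lemma trf_slope (M : ℝ) (l m : Ln) : l.1 < m.1 ↔ (trf M l).1 < (trf M m).1 := by
  simp only [trf]
  constructor <;> intro <;> linarith

lemma trf_xcr (M : ℝ) (l m : Ln) : xcr (trf M l) (trf M m) = xcr l m := by
  simp only [trf, xcr]
  congr 1 <;> ring

lemma trf_good {a b : ℕ} {F : Finset Ln} (M : ℝ) (h : GoodCfg a b F) :
    GoodCfg a b (F.image (trf M)) :=
  goodcfg_transport (trf M) 0 (trf_inj M) (trf_slope M)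
    (fun l m _ => by rw [trf_xcr, add_zero]) h

lemma tendsto_xcr_trf (u r : Ln) :
    Filter.Tendsto (fun M : ℝ => xcr u (trf M r) - M) Filter.atTop (nhds (u.1 - r.1)) := by
  have hev : ∀ᶠ M : ℝ in Filter.atTop,
      xcr u (trf M r) - M
        = (u.1 - r.1) + ((r.1 - u.1) ^ 2 - (r.2 - u.2)) / (M + (r.1 - u.1)) := by
    filter_upwards [Filter.eventually_gt_atTop (|r.1 - u.1|)] with M hM
    have h0 : 0 < M + (r.1 - u.1) := by
      have := neg_abs_le (r.1 - u.1)
      linarith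
    have hD : M + (r.1 - u.1) ≠ 0 := ne_of_gt h0
    rw [xcr]
    simp only [trf]
    rw [show u.1 - (r.1 + M) = -(M + (r.1 - u.1)) by ring, div_neg]
    field_simp
    ring
  rw [Filter.tendsto_congr' hev]
  have h2 : Filter.Tendsto (fun M : ℝ => ((r.1 - u.1) ^ 2 - (r.2 - u.2)) / (M + (r.1 - u.1)))
      Filter.atTop (nhds 0) :=
    Filter.Tendsto.div_atTop tendsto_const_nhds
      (Filter.tendsto_atTop_add_const_right _ _ Filter.tendsto_id)
  simpa using tendsto_const_nhds.add h2

lemma tendsto_xcr_trf_atTop (u r : Ln) :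
    Filter.Tendsto (fun M : ℝ => xcr u (trf M r)) Filter.atTop Filter.atTop := by
  have := (tendsto_xcr_trf u r).add_atTop (Filter.tendsto_id (α := ℝ))
  simpa using this

lemma goodcfg_step {a b : ℕ} (ha : 2 ≤ a) (hb : 2 ≤ b) {L R : Finset Ln}
    (hL : GoodCfg (a - 1) b L) (hR : GoodCfg a (b - 1) R) :
    ∃ F, GoodCfg a b F := by
  classical
  have E0 : ∀ᶠ M : ℝ in Filter.atTop, ∀ u ∈ L, ∀ r ∈ R, u.1 < (trf M r).1 := by
    rw [Filter.eventually_all_finset]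
    intro u hu
    rw [Filter.eventually_all_finset]
    intro r hr
    have h : Filter.Tendsto (fun M : ℝ => r.1 + M) Filter.atTop Filter.atTop :=
      Filter.tendsto_atTop_add_const_left _ _ Filter.tendsto_id
    exact (h.eventually_gt_atTop u.1).mono (fun M hM => by simpa [trf] using hM)
  have E2L : ∀ᶠ M : ℝ in Filter.atTop, ∀ u ∈ L, ∀ r ∈ R, ∀ w ∈ L, ∀ w' ∈ L,
      xcr w w' < xcr u (trf M r) := by
    rw [Filter.eventually_all_finset]; intro u hu
    rw [Filter.eventually_all_finset]; intro r hr
    rw [Filter.eventually_all_finset]; intro w hw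
    rw [Filter.eventually_all_finset]; intro w' hw'
    exact (tendsto_xcr_trf_atTop u r).eventually_gt_atTop (xcr w w')
  have E2R : ∀ᶠ M : ℝ in Filter.atTop, ∀ u ∈ L, ∀ r ∈ R, ∀ w ∈ R, ∀ w' ∈ R,
      xcr w w' < xcr u (trf M r) := by
    rw [Filter.eventually_all_finset]; intro u hu
    rw [Filter.eventually_all_finset]; intro r hr
    rw [Filter.eventually_all_finset]; intro w hw
    rw [Filter.eventually_all_finset]; intro w' hw'
    exact (tendsto_xcr_trf_atTop u r).eventually_gt_atTop (xcr w w')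
  have E3 : ∀ᶠ M : ℝ in Filter.atTop, ∀ u ∈ L, ∀ r ∈ R, ∀ r' ∈ R,
      r.1 < r'.1 → xcr u (trf M r') < xcr u (trf M r) := by
    rw [Filter.eventually_all_finset]; intro u hu
    rw [Filter.eventually_all_finset]; intro r hr
    rw [Filter.eventually_all_finset]; intro r' hr'
    by_cases hord : r.1 < r'.1
    · have hdiff : Filter.Tendsto
          (fun M : ℝ => (xcr u (trf M r') - M) - (xcr u (trf M r) - M))
          Filter.atTop (nhds ((u.1 - r'.1) - (u.1 - r.1))) :=
        (tendsto_xcr_trf u r').sub (tendsto_xcr_trf u r)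
      have hlt : (u.1 - r'.1) - (u.1 - r.1) < 0 := by linarith
      have := hdiff.eventually (eventually_lt_nhds hlt)
      exact this.mono (fun M hM _ => by linarith [hM])
    · exact Filter.Eventually.of_forall (fun M hc => absurd hc hord)
  have E4 : ∀ᶠ M : ℝ in Filter.atTop, ∀ u ∈ L, ∀ u' ∈ L, ∀ r ∈ R,
      u.1 < u'.1 → xcr u (trf M r) < xcr u' (trf M r) := by
    rw [Filter.eventually_all_finset]; intro u hu
    rw [Filter.eventually_all_finset]; intro u' hu'
    rw [Filter.eventually_all_finset]; intro r hr
    by_cases hord : u.1 < u'.1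
    · have hdiff : Filter.Tendsto
          (fun M : ℝ => (xcr u (trf M r) - M) - (xcr u' (trf M r) - M))
          Filter.atTop (nhds ((u.1 - r.1) - (u'.1 - r.1))) :=
        (tendsto_xcr_trf u r).sub (tendsto_xcr_trf u' r)
      have hlt : (u.1 - r.1) - (u'.1 - r.1) < 0 := by linarith
      have := hdiff.eventually (eventually_lt_nhds hlt)
      exact this.mono (fun M hM _ => by linarith [hM])
    · exact Filter.Eventually.of_forall (fun M hc => absurd hc hord)
  obtain ⟨M, h0, h2l, h2r, h3, h4⟩ := (E0.and (E2L.and (E2R.and (E3.and E4)))).exists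
  refine ⟨L ∪ R.image (trf M), union_good ha hb hL (trf_good M hR) ?_ ?_ ?_ ?_ ?_⟩
  · intro u hu r' hr'
    obtain ⟨r, hr, rfl⟩ := Finset.mem_image.mp hr'
    exact h0 u hu r hr
  · intro u hu r' hr' w hw w' hw' _
    obtain ⟨r, hr, rfl⟩ := Finset.mem_image.mp hr'
    exact h2l u hu r hr w hw w' hw'
  · intro u hu r' hr' w hw w' hw' _
    obtain ⟨r, hr, rfl⟩ := Finset.mem_image.mp hr'
    obtain ⟨w₀, hw₀, rfl⟩ := Finset.mem_image.mp hw
    obtain ⟨w₀', hw₀', rfl⟩ := Finset.mem_image.mp hw'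
    rw [trf_xcr]
    exact h2r u hu r hr w₀ hw₀ w₀' hw₀'
  · intro u hu r' hr' r'' hr'' hord
    obtain ⟨r, hr, rfl⟩ := Finset.mem_image.mp hr'
    obtain ⟨r₂, hr₂, rfl⟩ := Finset.mem_image.mp hr''
    exact h3 u hu r hr r₂ hr₂ ((trf_slope M r r₂).mpr hord)
  · intro u hu u' hu' r' hr' hord
    obtain ⟨r, hr, rfl⟩ := Finset.mem_image.mp hr'
    exact h4 u hu u' hu' r hr hord

lemma goodcfg_singleton_props :
    SlopeInj {((0:ℝ), (0:ℝ))} ∧ NoConc {((0:ℝ), (0:ℝ))} ∧ NoRU {((0:ℝ), (0:ℝ))} := by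
  refine ⟨?_, ?_, ?_⟩
  · intro l hl m hm hne
    rw [Finset.mem_singleton] at hl hm
    exact absurd (hl.trans hm.symm) hne
  · intro l hl m hm m' hm' h1 _ _
    rw [Finset.mem_singleton] at hl hm
    exact absurd (hl.trans hm.symm) h1
  · intro A B hA hB hAne hBne hdisj _ _
    rcases Finset.subset_singleton_iff.mp hA with rfl | rfl
    · exact absurd hAne (Finset.not_nonempty_empty)
    · rcases Finset.subset_singleton_iff.mp hB with rfl | rfl
      · exact absurd hBne (Finset.not_nonempty_empty)
      · exact absurd (Finset.disjoint_left.mp hdisj (Finset.mem_singleton_self _)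
          (Finset.mem_singleton_self _)) (fun _ => by simp at hdisj)

theorem goodcfg_exists (a b : ℕ) (ha : 1 ≤ a) (hb : 1 ≤ b) : ∃ F, GoodCfg a b F := by
  have key : ∀ (n a b : ℕ), a + b ≤ n → 1 ≤ a → 1 ≤ b → ∃ F, GoodCfg a b F := by
    intro n
    induction n with
    | zero => intro a b h ha hb; omega
    | succ n ih =>
      intro a b hab ha hb
      obtain ⟨hinj, hnoc, hnoru⟩ := goodcfg_singleton_props
      by_cases ha1 : a = 1
      · subst ha1
        refine ⟨{((0:ℝ), (0:ℝ))}, ?_, hinj, hnoc, ?_, ?_, hnoru⟩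
        · rw [Finset.card_singleton]
          have : 1 + b - 2 = b - 1 := by omega
          rw [this, show (1:ℕ) - 1 = 0 by omega, Nat.choose_zero_right]
        · intro S hS _
          calc S.card ≤ 1 := by
                have := Finset.card_le_card hS
                simpa using this
            _ ≤ 1 := le_rfl
        · intro S hS _
          have := Finset.card_le_card hS
          simp only [Finset.card_singleton] at this
          omega
      · by_cases hb1 : b = 1
        · subst hb1
          refine ⟨{((0:ℝ), (0:ℝ))}, ?_, hinj, hnoc, ?_, ?_, hnoru⟩
          · rw [Finset.card_singleton]
            have : a + 1 - 2 = a - 1 := by omega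
            rw [this, Nat.choose_self]
          · intro S hS _
            have := Finset.card_le_card hS
            simp only [Finset.card_singleton] at this
            omega
          · intro S hS _
            have := Finset.card_le_card hS
            simp only [Finset.card_singleton] at this
            omega
        · obtain ⟨FL, hFL⟩ := ih (a - 1) b (by omega) (by omega) hb
          obtain ⟨FR, hFR⟩ := ih a (b - 1) (by omega) ha (by omega)
          exact goodcfg_step (by omega) (by omega) hFL hFR
  exact key (a + b) a b le_rfl ha hb


/-! ### Static analysis of the composed family -/


/-- static (ε → 0 limit) slope order on index pairs (outer line, inner line). -/
def sOrd (p q : Ln × Ln) : Prop := p.1.1 < q.1.1 ∨ (p.1 = q.1 ∧ p.2.1 < q.2.1)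

/-- `q` is a lower constraint for `p` -/
def idxLw (SA SB : Finset (Ln × Ln)) (p q : Ln × Ln) : Prop :=
  (q ∈ SA ∧ sOrd q p) ∨ (q ∈ SB ∧ sOrd p q)

/-- `q` is an upper constraint for `p` -/
def idxUp (SA SB : Finset (Ln × Ln)) (p q : Ln × Ln) : Prop :=
  (q ∈ SA ∧ sOrd p q) ∨ (q ∈ SB ∧ sOrd q p)

theorem static_main {k : ℕ} {O I : Finset Ln} {SA SB : Finset (Ln × Ln)}
    (hk : 1 ≤ k)
    (hOinj : SlopeInj O) (hOconc : NoConc O)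
    (hOcup : ∀ S ⊆ O, Cup3 S → S.card ≤ k) (hOcap : ∀ S ⊆ O, Cap3 S → S.card ≤ k)
    (hOru : NoRU O) (hI : InnerCfg k I)
    (hSA : SA ⊆ O ×ˢ I) (hSB : SB ⊆ O ×ˢ I) (hdisj : Disjoint SA SB)
    (F1 : ∀ p ∈ SA ∪ SB, ∀ q₁ q₂ : Ln × Ln, idxLw SA SB p q₁ → idxUp SA SB p q₂ →
      q₁.1 = p.1 → q₂.1 = p.1 → xcr p.2 q₁.2 < xcr p.2 q₂.2)
    (F2 : ∀ p ∈ SA ∪ SB, ∀ q₁ q₂ : Ln × Ln, idxLw SA SB p q₁ → idxUp SA SB p q₂ →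
      q₁.1 = p.1 → q₂.1 ≠ p.1 → False)
    (F3 : ∀ p ∈ SA ∪ SB, ∀ q₁ q₂ : Ln × Ln, idxLw SA SB p q₁ → idxUp SA SB p q₂ →
      q₁.1 ≠ p.1 → q₂.1 ≠ p.1 → q₁.1 ≠ q₂.1 → xcr p.1 q₁.1 < xcr p.1 q₂.1)
    (F4 : ∀ p ∈ SA ∪ SB, ∀ q₁ q₂ : Ln × Ln, idxLw SA SB p q₁ → idxUp SA SB p q₂ →
      q₁.1 ≠ p.1 → q₁.1 = q₂.1 → 0 < (p.1.1 - q₁.1.1) * (q₁.2.1 - q₂.2.1)) :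
    (SA ∪ SB).card ≠ 2 * k + 2 := by
  classical
  intro hcard
  set CA := SA.image Prod.fst with hCAdef
  set CB := SB.image Prod.fst with hCBdef
  set Ao : Ln → Finset Ln := fun o => (SA.filter (fun p => p.1 = o)).image Prod.snd with hAodef
  set Bo : Ln → Finset Ln := fun o => (SB.filter (fun p => p.1 = o)).image Prod.snd with hBodef
  have memAo : ∀ o v, v ∈ Ao o ↔ (o, v) ∈ SA := by
    intro o v
    simp only [hAodef, Finset.mem_image, Finset.mem_filter]
    constructor
    · rintro ⟨p, ⟨hp, h1⟩, h2⟩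
      have : (o, v) = p := by rw [← h1, ← h2]
      rwa [this]
    · intro h
      exact ⟨(o, v), ⟨h, rfl⟩, rfl⟩
  have memBo : ∀ o v, v ∈ Bo o ↔ (o, v) ∈ SB := by
    intro o v
    simp only [hBodef, Finset.mem_image, Finset.mem_filter]
    constructor
    · rintro ⟨p, ⟨hp, h1⟩, h2⟩
      have : (o, v) = p := by rw [← h1, ← h2]
      rwa [this]
    · intro h
      exact ⟨(o, v), ⟨h, rfl⟩, rfl⟩
  have memCA : ∀ o, o ∈ CA ↔ (Ao o).Nonempty := by
    intro o
    simp only [hCAdef, Finset.mem_image]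
    constructor
    · rintro ⟨p, hp, rfl⟩
      exact ⟨p.2, (memAo p.1 p.2).mpr (by rwa [Prod.mk.eta])⟩
    · rintro ⟨v, hv⟩
      exact ⟨(o, v), (memAo o v).mp hv, rfl⟩
  have memCB : ∀ o, o ∈ CB ↔ (Bo o).Nonempty := by
    intro o
    simp only [hCBdef, Finset.mem_image]
    constructor
    · rintro ⟨p, hp, rfl⟩
      exact ⟨p.2, (memBo p.1 p.2).mpr (by rwa [Prod.mk.eta])⟩
    · rintro ⟨v, hv⟩
      exact ⟨(o, v), (memBo o v).mp hv, rfl⟩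
  have hCAO : CA ⊆ O := by
    intro o ho
    obtain ⟨p, hp, rfl⟩ := Finset.mem_image.mp ho
    exact (Finset.mem_product.mp (hSA hp)).1
  have hCBO : CB ⊆ O := by
    intro o ho
    obtain ⟨p, hp, rfl⟩ := Finset.mem_image.mp ho
    exact (Finset.mem_product.mp (hSB hp)).1
  have hAoI : ∀ o, Ao o ⊆ I := by
    intro o v hv
    exact (Finset.mem_product.mp (hSA ((memAo o v).mp hv))).2
  have hBoI : ∀ o, Bo o ⊆ I := by
    intro o v hv
    exact (Finset.mem_product.mp (hSB ((memBo o v).mp hv))).2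
  have hAoBo_disj : ∀ o, Disjoint (Ao o) (Bo o) := by
    intro o
    rw [Finset.disjoint_left]
    intro v hv hv'
    exact (Finset.disjoint_left.mp hdisj) ((memAo o v).mp hv) ((memBo o v).mp hv')
  -- cardinalities
  have cardSA : SA.card = ∑ o ∈ CA, (Ao o).card := by
    rw [Finset.card_eq_sum_card_fiberwise
      (fun p hp => Finset.mem_image_of_mem Prod.fst hp : ∀ p ∈ SA, p.1 ∈ CA)]
    apply Finset.sum_congr rfl
    intro o _
    rw [hAodef]
    exact (Finset.card_image_of_injOn (fun p hp p' hp' hpp => by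
      have h1 : p.1 = o := (Finset.mem_filter.mp hp).2
      have h2 : p'.1 = o := (Finset.mem_filter.mp hp').2
      exact Prod.ext (h1.trans h2.symm) hpp)).symm
  have cardSB : SB.card = ∑ o ∈ CB, (Bo o).card := by
    rw [Finset.card_eq_sum_card_fiberwise
      (fun p hp => Finset.mem_image_of_mem Prod.fst hp : ∀ p ∈ SB, p.1 ∈ CB)]
    apply Finset.sum_congr rfl
    intro o _
    rw [hBodef]
    exact (Finset.card_image_of_injOn (fun p hp p' hp' hpp => by
      have h1 : p.1 = o := (Finset.mem_filter.mp hp).2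
      have h2 : p'.1 = o := (Finset.mem_filter.mp hp').2
      exact Prod.ext (h1.trans h2.symm) hpp)).symm
  have cardsum : SA.card + SB.card = 2 * k + 2 := by
    rw [← hcard]
    exact (Finset.card_union_of_disjoint hdisj).symm
  -- inner slope distinctness within one cluster
  have innerslope : ∀ o : Ln, ∀ v ∈ I, ∀ w ∈ I, v ≠ w → v.1 ≠ w.1 := fun o => hI.inj
  -- the exposure kill: an exposed cluster admits no same-cluster lower constraints
  have expkill : ∀ o : Ln,
      ((∃ w ∈ SA, o.1 < w.1.1) ∨ (∃ w ∈ SB, w.1.1 < o.1)) →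
      ∀ p ∈ SA ∪ SB, p.1 = o → ∀ q₁, idxLw SA SB p q₁ → q₁.1 ≠ p.1 := by
    rintro o hexp p hp hpo q₁ hq₁ hq₁o
    rcases hexp with ⟨w, hwSA, hw⟩ | ⟨w, hwSB, hw⟩
    · refine F2 p hp q₁ w hq₁ ?_ hq₁o ?_
      · exact Or.inl ⟨hwSA, Or.inl (by rw [hpo]; exact hw)⟩
      · intro hcon
        rw [hcon, hpo] at hw
        exact lt_irrefl _ hw
    · refine F2 p hp q₁ w hq₁ ?_ hq₁o ?_
      · exact Or.inr ⟨hwSB, Or.inl (by rw [hpo]; exact hw)⟩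
      · intro hcon
        rw [hcon, hpo] at hw
        exact lt_irrefl _ hw
  -- exposed clusters have at most one A-line and one B-line
  have hA1 : ∀ o : Ln, ((∃ w ∈ SA, o.1 < w.1.1) ∨ (∃ w ∈ SB, w.1.1 < o.1)) →
      (Ao o).card ≤ 1 := by
    intro o hexp
    by_contra hc
    obtain ⟨v, hv, v', hv', hvv⟩ := Finset.one_lt_card.mp (not_le.mp hc)
    have hvI := hAoI o hv
    have hvI' := hAoI o hv'
    rcases lt_or_gt_of_ne (hI.inj v hvI v' hvI' hvv) with ho | ho
    · exact expkill o hexp (o, v') (Finset.mem_union_left _ ((memAo o v').mp hv')) rfl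
        (o, v) (Or.inl ⟨(memAo o v).mp hv, Or.inr ⟨rfl, ho⟩⟩) rfl
    · exact expkill o hexp (o, v) (Finset.mem_union_left _ ((memAo o v).mp hv)) rfl
        (o, v') (Or.inl ⟨(memAo o v').mp hv', Or.inr ⟨rfl, ho⟩⟩) rfl
  have hB1 : ∀ o : Ln, ((∃ w ∈ SA, o.1 < w.1.1) ∨ (∃ w ∈ SB, w.1.1 < o.1)) →
      (Bo o).card ≤ 1 := by
    intro o hexp
    by_contra hc
    obtain ⟨v, hv, v', hv', hvv⟩ := Finset.one_lt_card.mp (not_le.mp hc)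
    have hvI := hBoI o hv
    have hvI' := hBoI o hv'
    rcases lt_or_gt_of_ne (hI.inj v hvI v' hvI' hvv) with ho | ho
    · exact expkill o hexp (o, v) (Finset.mem_union_right _ ((memBo o v).mp hv)) rfl
        (o, v') (Or.inr ⟨(memBo o v').mp hv', Or.inr ⟨rfl, ho⟩⟩) rfl
    · exact expkill o hexp (o, v') (Finset.mem_union_right _ ((memBo o v').mp hv')) rfl
        (o, v) (Or.inr ⟨(memBo o v).mp hv, Or.inr ⟨rfl, ho⟩⟩) rfl
  -- inner per-cluster bounds via cup/cap
  have hAk : ∀ o : Ln, (Ao o).card ≤ k := by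
    intro o
    apply hI.nocup (Ao o) (hAoI o)
    intro v₁ h1 v₂ h2 v₃ h3 ho1 ho2
    have := F1 (o, v₂) (Finset.mem_union_left _ ((memAo o v₂).mp h2))
      (o, v₁) (o, v₃)
      (Or.inl ⟨(memAo o v₁).mp h1, Or.inr ⟨rfl, ho1⟩⟩)
      (Or.inl ⟨(memAo o v₃).mp h3, Or.inr ⟨rfl, ho2⟩⟩) rfl rfl
    rwa [show ((o, v₂) : Ln × Ln).2 = v₂ from rfl, xcr_comm v₂ v₁] at this
  have hBk : ∀ o : Ln, (Bo o).card ≤ k := by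
    intro o
    apply hI.nocap (Bo o) (hBoI o)
    intro v₁ h1 v₂ h2 v₃ h3 ho1 ho2
    have := F1 (o, v₂) (Finset.mem_union_right _ ((memBo o v₂).mp h2))
      (o, v₃) (o, v₁)
      (Or.inr ⟨(memBo o v₃).mp h3, Or.inr ⟨rfl, ho2⟩⟩)
      (Or.inr ⟨(memBo o v₁).mp h1, Or.inr ⟨rfl, ho1⟩⟩) rfl rfl
    rwa [show ((o, v₂) : Ln × Ln).2 = v₂ from rfl, xcr_comm v₂ v₁] at this
  -- per-cluster inner flag
  have hInnerFlag : ∀ o : Ln, Flag (Ao o) (Bo o) := by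
    intro o l hl m₁ hm₁ m₂ hm₂
    have hpS : (o, l) ∈ SA ∪ SB := by
      rcases Finset.mem_union.mp hl with h | h
      · exact Finset.mem_union_left _ ((memAo o l).mp h)
      · exact Finset.mem_union_right _ ((memBo o l).mp h)
    have hq₁ : idxLw SA SB (o, l) (o, m₁) := by
      rcases Finset.mem_union.mp hm₁ with h | h
      · exact Or.inl ⟨(memAo o m₁).mp (Finset.mem_filter.mp h).1,
          Or.inr ⟨rfl, (Finset.mem_filter.mp h).2⟩⟩
      · exact Or.inr ⟨(memBo o m₁).mp (Finset.mem_filter.mp h).1,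
          Or.inr ⟨rfl, (Finset.mem_filter.mp h).2⟩⟩
    have hq₂ : idxUp SA SB (o, l) (o, m₂) := by
      rcases Finset.mem_union.mp hm₂ with h | h
      · exact Or.inl ⟨(memAo o m₂).mp (Finset.mem_filter.mp h).1,
          Or.inr ⟨rfl, (Finset.mem_filter.mp h).2⟩⟩
      · exact Or.inr ⟨(memBo o m₂).mp (Finset.mem_filter.mp h).1,
          Or.inr ⟨rfl, (Finset.mem_filter.mp h).2⟩⟩
    exact F1 (o, l) hpS (o, m₁) (o, m₂) hq₁ hq₂ rfl rfl
  -- outer chains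
  have hCAcup : CA.card ≤ k := by
    apply hOcup CA hCAO
    intro o₁ h1 o₂ h2 o₃ h3 ho1 ho2
    obtain ⟨v₁, hv1⟩ := (memCA o₁).mp h1
    obtain ⟨v₂, hv2⟩ := (memCA o₂).mp h2
    obtain ⟨v₃, hv3⟩ := (memCA o₃).mp h3
    have hF := F3 (o₂, v₂) (Finset.mem_union_left _ ((memAo o₂ v₂).mp hv2))
      (o₁, v₁) (o₃, v₃)
      (Or.inl ⟨(memAo o₁ v₁).mp hv1, Or.inl ho1⟩)
      (Or.inl ⟨(memAo o₃ v₃).mp hv3, Or.inl ho2⟩)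
      (fun h => by rw [show o₁ = o₂ from h] at ho1; exact lt_irrefl _ ho1)
      (fun h => by rw [show o₃ = o₂ from h] at ho2; exact lt_irrefl _ ho2)
      (fun h => by
        rw [show o₁ = o₃ from h] at ho1
        exact lt_irrefl _ (ho1.trans ho2))
    rwa [show ((o₂, v₂) : Ln × Ln).1 = o₂ from rfl, xcr_comm o₂ o₁] at hF
  have hCBcap : CB.card ≤ k := by
    apply hOcap CB hCBO
    intro o₁ h1 o₂ h2 o₃ h3 ho1 ho2
    obtain ⟨v₁, hv1⟩ := (memCB o₁).mp h1
    obtain ⟨v₂, hv2⟩ := (memCB o₂).mp h2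
    obtain ⟨v₃, hv3⟩ := (memCB o₃).mp h3
    have hF := F3 (o₂, v₂) (Finset.mem_union_right _ ((memBo o₂ v₂).mp hv2))
      (o₃, v₃) (o₁, v₁)
      (Or.inr ⟨(memBo o₃ v₃).mp hv3, Or.inl ho2⟩)
      (Or.inr ⟨(memBo o₁ v₁).mp hv1, Or.inl ho1⟩)
      (fun h => by rw [show o₃ = o₂ from h] at ho2; exact lt_irrefl _ ho2)
      (fun h => by rw [show o₁ = o₂ from h] at ho1; exact lt_irrefl _ ho1)
      (fun h => by
        rw [show o₃ = o₁ from h] at ho2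
        exact lt_irrefl _ (ho1.trans ho2))
    rwa [show ((o₂, v₂) : Ln × Ln).1 = o₂ from rfl, xcr_comm o₂ o₁] at hF
  -- second-order slope separation inside a mixed cluster seen from another cluster
  have hmix : ∀ o' : Ln, (∃ p ∈ SA ∪ SB, p.1 ≠ o') →
      ∀ v ∈ Ao o', ∀ w ∈ Bo o', w.1 < v.1 := by
    rintro o' ⟨p, hp, hpo⟩ v hv w hw
    have hvSA := (memAo o' v).mp hv
    have hwSB := (memBo o' w).mp hw
    have hoO : o' ∈ O := hCAO ((memCA o').mpr ⟨v, hv⟩)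
    have hpO : p.1 ∈ O := by
      rcases Finset.mem_union.mp hp with h | h
      · exact (Finset.mem_product.mp (hSA h)).1
      · exact (Finset.mem_product.mp (hSB h)).1
    have hslope : p.1.1 ≠ o'.1 := hOinj p.1 hpO o' hoO hpo
    have hvw : v ≠ w := by
      intro h
      rw [h] at hvSA
      exact (Finset.disjoint_left.mp hdisj) hvSA hwSB
    have hvws : v.1 ≠ w.1 := hI.inj v (hAoI o' hv) w (hBoI o' hw) hvw
    rcases lt_or_gt_of_ne hvws with hor | hor
    · -- v.1 < w.1 : contradiction
      exfalso
      rcases lt_or_gt_of_ne hslope with hc | hc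
      · -- p below cluster o' : (o',w) is lower (B side), (o',v) is upper (A side)
        have h4 := F4 p hp (o', w) (o', v)
          (Or.inr ⟨hwSB, Or.inl hc⟩)
          (Or.inl ⟨hvSA, Or.inl hc⟩)
          (fun h => hslope (by rw [← h]))
          rfl
        -- 0 < (p.1.1 - o'.1) * (w.1 - v.1) with p.1.1 < o'.1 and w.1 > v.1
        nlinarith
      · -- p above cluster o' : (o',v) is lower (A side), (o',w) is upper (B side)
        have h4 := F4 p hp (o', v) (o', w)
          (Or.inl ⟨hvSA, Or.inl hc⟩)
          (Or.inr ⟨hwSB, Or.inl hc⟩)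
          (fun h => hslope (by rw [← h]))
          rfl
        nlinarith
    · exact hor
  -- sum bound helper
  have sum_bound : ∀ (C : Finset Ln) (g : Ln → ℕ) (x : Ln) (K : ℕ), x ∈ C → g x ≤ K →
      (∀ o ∈ C, o ≠ x → g o ≤ 1) → ∑ o ∈ C, g o ≤ K + (C.card - 1) := by
    intro C g x K hx hgx hother
    have h1 : ∑ o ∈ C, g o = g x + ∑ o ∈ C.erase x, g o :=
      (Finset.add_sum_erase C g hx).symm
    have h2 : ∑ o ∈ C.erase x, g o ≤ (C.erase x).card • 1 :=
      Finset.sum_le_card_nsmul _ _ 1 (fun o ho =>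
        hother o (Finset.mem_of_mem_erase ho) (Finset.ne_of_mem_erase ho))
    have h3 : (C.erase x).card = C.card - 1 := Finset.card_erase_of_mem hx
    simp only [smul_eq_mul, mul_one] at h2
    omega
  -- the separated-clusters contradiction via outer NoRU
  have hsepkill : CA.Nonempty → CB.Nonempty →
      (∀ o ∈ CA, ∀ o' ∈ CB, o.1 < o'.1) → CA.card + CB.card ≤ 3 := by
    intro hCAne hCBne hsep
    have hdisjC : Disjoint CA CB := by
      rw [Finset.disjoint_left]
      intro o ho ho'
      exact absurd (hsep o ho o ho') (lt_irrefl _)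
    have hflagC : Flag CA CB := by
      intro l hl m₁ hm₁ m₂ hm₂
      -- choose a witness line in the fiber of l
      have hfib : ∃ p ∈ SA ∪ SB, p.1 = l := by
        rcases Finset.mem_union.mp hl with h | h
        · obtain ⟨v, hv⟩ := (memCA l).mp h
          exact ⟨(l, v), Finset.mem_union_left _ ((memAo l v).mp hv), rfl⟩
        · obtain ⟨v, hv⟩ := (memCB l).mp h
          exact ⟨(l, v), Finset.mem_union_right _ ((memBo l v).mp hv), rfl⟩
      obtain ⟨p, hpS, hpl⟩ := hfib
      have hq : ∀ m : Ln, (m ∈ CA ∧ m.1 < l.1) ∨ (m ∈ CB ∧ l.1 < m.1) →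
          ∃ qq : Ln × Ln, qq.1 = m ∧ idxLw SA SB p qq := by
        rintro m (⟨hm, hs⟩ | ⟨hm, hs⟩)
        · obtain ⟨v, hv⟩ := (memCA m).mp hm
          exact ⟨(m, v), rfl, Or.inl ⟨(memAo m v).mp hv, Or.inl (by rw [hpl]; exact hs)⟩⟩
        · obtain ⟨v, hv⟩ := (memCB m).mp hm
          exact ⟨(m, v), rfl, Or.inr ⟨(memBo m v).mp hv, Or.inl (by rw [hpl]; exact hs)⟩⟩
      have hq' : ∀ m : Ln, (m ∈ CA ∧ l.1 < m.1) ∨ (m ∈ CB ∧ m.1 < l.1) →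
          ∃ qq : Ln × Ln, qq.1 = m ∧ idxUp SA SB p qq := by
        rintro m (⟨hm, hs⟩ | ⟨hm, hs⟩)
        · obtain ⟨v, hv⟩ := (memCA m).mp hm
          exact ⟨(m, v), rfl, Or.inl ⟨(memAo m v).mp hv, Or.inl (by rw [hpl]; exact hs)⟩⟩
        · obtain ⟨v, hv⟩ := (memCB m).mp hm
          exact ⟨(m, v), rfl, Or.inr ⟨(memBo m v).mp hv, Or.inl (by rw [hpl]; exact hs)⟩⟩
      have hm₁' : (m₁ ∈ CA ∧ m₁.1 < l.1) ∨ (m₁ ∈ CB ∧ l.1 < m₁.1) := by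
        rcases Finset.mem_union.mp hm₁ with h | h
        · exact Or.inl ⟨(Finset.mem_filter.mp h).1, (Finset.mem_filter.mp h).2⟩
        · exact Or.inr ⟨(Finset.mem_filter.mp h).1, (Finset.mem_filter.mp h).2⟩
      have hm₂' : (m₂ ∈ CA ∧ l.1 < m₂.1) ∨ (m₂ ∈ CB ∧ m₂.1 < l.1) := by
        rcases Finset.mem_union.mp hm₂ with h | h
        · exact Or.inl ⟨(Finset.mem_filter.mp h).1, (Finset.mem_filter.mp h).2⟩
        · exact Or.inr ⟨(Finset.mem_filter.mp h).1, (Finset.mem_filter.mp h).2⟩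
      obtain ⟨q₁, hq₁eq, hq₁⟩ := hq m₁ hm₁'
      obtain ⟨q₂, hq₂eq, hq₂⟩ := hq' m₂ hm₂'
      have hs₁ : m₁.1 ≠ l.1 := by
        rcases hm₁' with ⟨_, h⟩ | ⟨_, h⟩
        · exact ne_of_lt h
        · exact ne_of_gt h
      have hs₂ : m₂.1 ≠ l.1 := by
        rcases hm₂' with ⟨_, h⟩ | ⟨_, h⟩
        · exact ne_of_gt h
        · exact ne_of_lt h
      have hs₁₂ : m₁.1 ≠ m₂.1 := by
        rcases hm₁' with ⟨hm₁m, h⟩ | ⟨hm₁m, h⟩ <;> rcases hm₂' with ⟨hm₂m, h'⟩ | ⟨hm₂m, h'⟩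
        · exact ne_of_lt (h.trans h')
        · exact ne_of_lt (hsep m₁ hm₁m m₂ hm₂m)
        · exact ne_of_gt (hsep m₂ hm₂m m₁ hm₁m)
        · exact ne_of_gt (h'.trans h)
      have := F3 p hpS q₁ q₂ hq₁ hq₂
        (by rw [hq₁eq, hpl]; intro hcon; exact hs₁ (by rw [hcon])
        )
        (by rw [hq₂eq, hpl]; intro hcon; exact hs₂ (by rw [hcon]))
        (by rw [hq₁eq, hq₂eq]; intro hcon; exact hs₁₂ (by rw [hcon]))
      rwa [hpl, hq₁eq, hq₂eq] at this
    have := hOru CA CB hCAO hCBO hCAne hCBne hdisjC hsep hflagC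
    rwa [Finset.card_union_of_disjoint hdisjC] at this
  by_cases hCAe : CA.Nonempty
  · by_cases hCBe : CB.Nonempty
    · -- main case
      obtain ⟨α, hαCA, hαmax⟩ := CA.exists_max_image (fun o => o.1) hCAe
      obtain ⟨β, hβCB, hβmin⟩ := CB.exists_min_image (fun o => o.1) hCBe
      have hαO : α ∈ O := hCAO hαCA
      have hβO : β ∈ O := hCBO hβCB
      obtain ⟨vα, hvα⟩ := (memCA α).mp hαCA
      obtain ⟨vβ, hvβ⟩ := (memCB β).mp hβCB
      have cA1 : ∀ o ∈ CA, o ≠ α → (Ao o).card ≤ 1 := by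
        intro o ho hne
        apply hA1
        left
        refine ⟨(α, vα), (memAo α vα).mp hvα, ?_⟩
        exact lt_of_le_of_ne (hαmax o ho) (hOinj o (hCAO ho) α hαO hne)
      have cB1 : ∀ o ∈ CB, o ≠ β → (Bo o).card ≤ 1 := by
        intro o ho hne
        apply hB1
        right
        refine ⟨(β, vβ), (memBo β vβ).mp hvβ, ?_⟩
        exact lt_of_le_of_ne (hβmin o ho) (hOinj β hβO o (hCBO ho) (fun h => hne h.symm))
      set p := (Ao α).card with hpdef
      set q := (Bo β).card with hqdef
      have hSAle : SA.card ≤ p + (CA.card - 1) := by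
        rw [cardSA]
        exact sum_bound CA (fun o => (Ao o).card) α p hαCA le_rfl cA1
      have hSBle : SB.card ≤ q + (CB.card - 1) := by
        rw [cardSB]
        exact sum_bound CB (fun o => (Bo o).card) β q hβCB le_rfl cB1
      have hpk : p ≤ k := hAk α
      have hqk : q ≤ k := hBk β
      have hCA1 : 1 ≤ CA.card := Finset.card_pos.mpr hCAe
      have hCB1 : 1 ≤ CB.card := Finset.card_pos.mpr hCBe
      -- the mixed-cluster contradiction
      have hmixkill : β = α → False := by
        intro hab
        subst hab
        have hAoNe : (Ao β).Nonempty := ⟨vα, hvα⟩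
        have hBoNe : (Bo β).Nonempty := ⟨vβ, hvβ⟩
        by_cases hoth : ∃ o ∈ CA ∪ CB, o ≠ β
        · obtain ⟨o, hoCC, hone⟩ := hoth
          have hfib : ∃ pp ∈ SA ∪ SB, pp.1 ≠ β := by
            rcases Finset.mem_union.mp hoCC with h | h
            · obtain ⟨v, hv⟩ := (memCA o).mp h
              exact ⟨(o, v), Finset.mem_union_left _ ((memAo o v).mp hv), hone⟩
            · obtain ⟨v, hv⟩ := (memCB o).mp h
              exact ⟨(o, v), Finset.mem_union_right _ ((memBo o v).mp hv), hone⟩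
          have hsepi : SlopeSep (Bo β) (Ao β) := by
            intro w hw v hv
            exact hmix β hfib v hv w hw
          have hle3 := hI.nolu (Ao β) (Bo β) (hAoI β) (hBoI β) hAoNe hBoNe
            (hAoBo_disj β) hsepi (hInnerFlag β)
          rw [Finset.card_union_of_disjoint (hAoBo_disj β)] at hle3
          omega
        · push_neg at hoth
          have hCAsub : CA ⊆ {β} := fun o ho => Finset.mem_singleton.mpr
            (hoth o (Finset.mem_union_left _ ho))
          have hCBsub : CB ⊆ {β} := fun o ho => Finset.mem_singleton.mpr
            (hoth o (Finset.mem_union_right _ ho))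
          have h1 : CA.card ≤ 1 := by
            have := Finset.card_le_card hCAsub
            simpa using this
          have h2 : CB.card ≤ 1 := by
            have := Finset.card_le_card hCBsub
            simpa using this
          omega
      by_cases hp2 : 2 ≤ p
      · have hunexp : ¬((∃ w ∈ SA, α.1 < w.1.1) ∨ (∃ w ∈ SB, w.1.1 < α.1)) := by
          intro h
          have := hA1 α h
          omega
        push_neg at hunexp
        by_cases hab : β = α
        · exact hmixkill hab
        · have hαβ : α.1 < β.1 := by
            have h1 : α.1 ≤ β.1 := hunexp.2 (β, vβ) ((memBo β vβ).mp hvβ)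
            exact lt_of_le_of_ne h1 (hOinj α hαO β hβO (fun h => hab h.symm))
          have hsep : ∀ o ∈ CA, ∀ o' ∈ CB, o.1 < o'.1 := by
            intro o ho o' ho'
            calc o.1 ≤ α.1 := hαmax o ho
              _ < β.1 := hαβ
              _ ≤ o'.1 := hβmin o' ho'
          have h3 := hsepkill hCAe hCBe hsep
          omega
      · by_cases hq2 : 2 ≤ q
        · have hunexp : ¬((∃ w ∈ SA, β.1 < w.1.1) ∨ (∃ w ∈ SB, w.1.1 < β.1)) := by
            intro h
            have := hB1 β h
            omega
          push_neg at hunexp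
          by_cases hab : β = α
          · exact hmixkill hab
          · have hαβ : α.1 < β.1 := by
              have h1 : α.1 ≤ β.1 := hunexp.1 (α, vα) ((memAo α vα).mp hvα)
              exact lt_of_le_of_ne h1 (hOinj α hαO β hβO (fun h => hab h.symm))
            have hsep : ∀ o ∈ CA, ∀ o' ∈ CB, o.1 < o'.1 := by
              intro o ho o' ho'
              calc o.1 ≤ α.1 := hαmax o ho
                _ < β.1 := hαβ
                _ ≤ o'.1 := hβmin o' ho'
            have h3 := hsepkill hCAe hCBe hsep
            omega
        · omega
    · -- CB empty : only A-lines
      have hSBe : SB = ∅ := by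
        rw [Finset.not_nonempty_iff_eq_empty] at hCBe
        by_contra h
        obtain ⟨pp, hpp⟩ := Finset.nonempty_iff_ne_empty.mpr h
        have : pp.1 ∈ CB := Finset.mem_image_of_mem _ hpp
        rw [hCBe] at this
        exact absurd this (Finset.notMem_empty _)
      obtain ⟨α, hαCA, hαmax⟩ := CA.exists_max_image (fun o => o.1) hCAe
      obtain ⟨vα, hvα⟩ := (memCA α).mp hαCA
      have cA1 : ∀ o ∈ CA, o ≠ α → (Ao o).card ≤ 1 := by
        intro o ho hne
        apply hA1
        left
        refine ⟨(α, vα), (memAo α vα).mp hvα, ?_⟩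
        exact lt_of_le_of_ne (hαmax o ho) (hOinj o (hCAO ho) α (hCAO hαCA) hne)
      have hSAle : SA.card ≤ k + (CA.card - 1) := by
        rw [cardSA]
        exact sum_bound CA (fun o => (Ao o).card) α k hαCA (hAk α) cA1
      have hSB0 : SB.card = 0 := by rw [hSBe]; rfl
      have hCA1 : 1 ≤ CA.card := Finset.card_pos.mpr hCAe
      omega
  · -- CA empty : only B-lines
    have hSAe : SA = ∅ := by
      rw [Finset.not_nonempty_iff_eq_empty] at hCAe
      by_contra h
      obtain ⟨pp, hpp⟩ := Finset.nonempty_iff_ne_empty.mpr h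
      have : pp.1 ∈ CA := Finset.mem_image_of_mem _ hpp
      rw [hCAe] at this
      exact absurd this (Finset.notMem_empty _)
    have hCBe : CB.Nonempty := by
      have hq : SB.Nonempty := by
        apply Finset.card_pos.mp
        have : SA.card = 0 := by rw [hSAe]; rfl
        omega
      obtain ⟨pp, hpp⟩ := hq
      exact ⟨pp.1, Finset.mem_image_of_mem _ hpp⟩
    obtain ⟨β, hβCB, hβmin⟩ := CB.exists_min_image (fun o => o.1) hCBe
    obtain ⟨vβ, hvβ⟩ := (memCB β).mp hβCB
    have cB1 : ∀ o ∈ CB, o ≠ β → (Bo o).card ≤ 1 := by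
      intro o ho hne
      apply hB1
      right
      refine ⟨(β, vβ), (memBo β vβ).mp hvβ, ?_⟩
      exact lt_of_le_of_ne (hβmin o ho) (hOinj β (hCBO hβCB) o (hCBO ho) (fun h => hne h.symm))
    have hSBle : SB.card ≤ k + (CB.card - 1) := by
      rw [cardSB]
      exact sum_bound CB (fun o => (Bo o).card) β k hβCB (hBk β) cB1
    have hSA0 : SA.card = 0 := by rw [hSAe]; rfl
    have hCB1 : 1 ≤ CB.card := Finset.card_pos.mpr hCBe
    omega

/-! ### The composed (cluster) family : analytic part -/

def emb (ε : ℝ) (pp : Ln × Ln) : Ln :=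
  (pp.1.1 + ε * pp.2.1, pp.1.2 + ε * pp.2.2)

lemma xcr_emb_same (ε : ℝ) (hε : ε ≠ 0) (o u v : Ln) :
    xcr (emb ε (o, u)) (emb ε (o, v)) = xcr u v := by
  simp only [emb, xcr]
  rw [show o.2 + ε * v.2 - (o.2 + ε * u.2) = ε * (v.2 - u.2) by ring,
    show o.1 + ε * u.1 - (o.1 + ε * v.1) = ε * (u.1 - v.1) by ring,
    mul_div_mul_left _ _ hε]

lemma xcr_emb_cross (ε : ℝ) (o o' u v : Ln) :
    xcr (emb ε (o, u)) (emb ε (o', v))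
      = ((o'.2 - o.2) + ε * (v.2 - u.2)) / ((o.1 - o'.1) + ε * (u.1 - v.1)) := by
  simp only [emb, xcr]
  congr 1 <;> ring

lemma tendsto_aff (a b : ℝ) :
    Filter.Tendsto (fun ε : ℝ => a + ε * b) (nhdsWithin 0 (Set.Ioi 0)) (nhds a) := by
  have : Filter.Tendsto (fun ε : ℝ => a + ε * b) (nhds 0) (nhds (a + 0 * b)) := by
    apply Filter.Tendsto.add tendsto_const_nhds
    exact (continuous_id.mul continuous_const).tendsto 0
  simpa using this.mono_left nhdsWithin_le_nhds

lemma tendsto_ratio (C aa E bb : ℝ) (hE : E ≠ 0) :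
    Filter.Tendsto (fun ε : ℝ => (C + ε * aa) / (E + ε * bb))
      (nhdsWithin 0 (Set.Ioi 0)) (nhds (C / E)) :=
  (tendsto_aff C aa).div (tendsto_aff E bb) hE

lemma tendsto_xcr_cross (o o' u v : Ln) (hoo : o.1 ≠ o'.1) :
    Filter.Tendsto (fun ε : ℝ => xcr (emb ε (o, u)) (emb ε (o', v)))
      (nhdsWithin 0 (Set.Ioi 0)) (nhds (xcr o o')) := by
  have := tendsto_ratio (o'.2 - o.2) (v.2 - u.2) (o.1 - o'.1) (u.1 - v.1) (sub_ne_zero.mpr hoo)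
  rw [show (o'.2 - o.2) / (o.1 - o'.1) = xcr o o' from rfl] at this
  apply this.congr
  intro ε
  rw [xcr_emb_cross]

lemma eventually_pos : ∀ᶠ ε : ℝ in nhdsWithin 0 (Set.Ioi 0), 0 < ε :=
  eventually_mem_nhdsWithin

/-- second-order expansion for two lines of a common other cluster -/
lemma tendsto_xcr_so (o o' u v₁ v₂ : Ln) (hoo : o.1 ≠ o'.1) :
    Filter.Tendsto
      (fun ε : ℝ => (xcr (emb ε (o, u)) (emb ε (o', v₁))
        - xcr (emb ε (o, u)) (emb ε (o', v₂))) / ε)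
      (nhdsWithin 0 (Set.Ioi 0))
      (nhds (((o'.2 - o.2) * (v₁.1 - v₂.1) + (o.1 - o'.1) * (v₁.2 - v₂.2))
        / ((o.1 - o'.1) * (o.1 - o'.1)))) := by
  set C := o'.2 - o.2 with hC
  set E := o.1 - o'.1 with hE
  set a₁ := v₁.2 - u.2 with ha₁
  set a₂ := v₂.2 - u.2 with ha₂
  set b₁ := u.1 - v₁.1 with hb₁
  set b₂ := u.1 - v₂.1 with hb₂
  have hEne : E ≠ 0 := sub_ne_zero.mpr hoo
  have hev : ∀ᶠ ε : ℝ in nhdsWithin 0 (Set.Ioi 0),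
      (xcr (emb ε (o, u)) (emb ε (o', v₁)) - xcr (emb ε (o, u)) (emb ε (o', v₂))) / ε
        = ((C * (v₁.1 - v₂.1) + E * (v₁.2 - v₂.2)) + ε * (a₁ * b₂ - a₂ * b₁))
          / ((E + ε * b₁) * (E + ε * b₂)) := by
    filter_upwards [eventually_pos,
      (tendsto_aff E b₁).eventually_ne hEne,
      (tendsto_aff E b₂).eventually_ne hEne] with ε hε h1 h2
    rw [xcr_emb_cross, xcr_emb_cross]
    rw [← hC, ← hE, ← ha₁, ← ha₂, ← hb₁, ← hb₂]
    have hε0 : ε ≠ 0 := ne_of_gt hε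
    field_simp
    ring
  rw [Filter.tendsto_congr' hev]
  have h1 : Filter.Tendsto
      (fun ε : ℝ => (C * (v₁.1 - v₂.1) + E * (v₁.2 - v₂.2)) + ε * (a₁ * b₂ - a₂ * b₁))
      (nhdsWithin 0 (Set.Ioi 0)) (nhds (C * (v₁.1 - v₂.1) + E * (v₁.2 - v₂.2))) :=
    tendsto_aff _ _
  have h2 : Filter.Tendsto (fun ε : ℝ => (E + ε * b₁) * (E + ε * b₂))
      (nhdsWithin 0 (Set.Ioi 0)) (nhds (E * E)) :=
    (tendsto_aff E b₁).mul (tendsto_aff E b₂)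
  exact h1.div h2 (mul_ne_zero hEne hEne)

lemma freq_le {f g : ℝ → ℝ} {x y : ℝ}
    (hf : Filter.Tendsto f (nhdsWithin 0 (Set.Ioi 0)) (nhds x))
    (hg : Filter.Tendsto g (nhdsWithin 0 (Set.Ioi 0)) (nhds y))
    (h : ∃ᶠ ε in nhdsWithin 0 (Set.Ioi 0), f ε < g ε) : x ≤ y := by
  by_contra hc
  obtain ⟨ε, h1, h2⟩ := (h.and_eventually (hg.eventually_lt hf (not_le.mp hc))).exists
  exact absurd (h1.trans h2) (lt_irrefl _)

lemma sOrd_asymm {pp qq : Ln × Ln} (h1 : sOrd pp qq) (h2 : sOrd qq pp) : False := by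
  rcases h1 with h | ⟨he, h⟩ <;> rcases h2 with h' | ⟨he', h'⟩
  · exact absurd (h.trans h') (lt_irrefl _)
  · rw [he'] at h; exact absurd h (lt_irrefl _)
  · rw [he] at h'; exact absurd h' (lt_irrefl _)
  · exact absurd (h.trans h') (lt_irrefl _)

lemma evord (O I : Finset Ln) :
    ∀ᶠ ε : ℝ in nhdsWithin 0 (Set.Ioi 0),
      ∀ pp ∈ O ×ˢ I, ∀ qq ∈ O ×ˢ I, sOrd pp qq → (emb ε pp).1 < (emb ε qq).1 := by
  rw [Filter.eventually_all_finset]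
  intro pp hpp
  rw [Filter.eventually_all_finset]
  intro qq hqq
  by_cases hs : sOrd pp qq
  · rcases hs with h | ⟨h1, h2⟩
    · have := (tendsto_aff pp.1.1 pp.2.1).eventually_lt (tendsto_aff qq.1.1 qq.2.1) h
      exact this.mono (fun ε hε _ => hε)
    · refine eventually_pos.mono (fun ε hε _ => ?_)
      show pp.1.1 + ε * pp.2.1 < qq.1.1 + ε * qq.2.1
      rw [h1]
      have := mul_lt_mul_of_pos_left h2 hε
      linarith
  · exact Filter.Eventually.of_forall (fun ε h => absurd h hs)


lemma sOrd_total {O I : Finset Ln} (hOinj : SlopeInj O) (hIinj : SlopeInj I)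
    {pp qq : Ln × Ln} (hp : pp ∈ O ×ˢ I) (hq : qq ∈ O ×ˢ I) (hne : pp ≠ qq) :
    sOrd pp qq ∨ sOrd qq pp := by
  obtain ⟨hp1, hp2⟩ := Finset.mem_product.mp hp
  obtain ⟨hq1, hq2⟩ := Finset.mem_product.mp hq
  by_cases h1 : pp.1 = qq.1
  · have h2 : pp.2 ≠ qq.2 := fun h => hne (Prod.ext h1 h)
    rcases lt_or_gt_of_ne (hIinj pp.2 hp2 qq.2 hq2 h2) with h | h
    · exact Or.inl (Or.inr ⟨h1, h⟩)
    · exact Or.inr (Or.inr ⟨h1.symm, h⟩)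
  · rcases lt_or_gt_of_ne (hOinj pp.1 hp1 qq.1 hq1 h1) with h | h
    · exact Or.inl (Or.inl h)
    · exact Or.inr (Or.inl h)

lemma candidate_kill {k : ℕ} (hk : 1 ≤ k) {O I : Finset Ln}
    (hOinj : SlopeInj O) (hOconc : NoConc O)
    (hOcup : ∀ S ⊆ O, Cup3 S → S.card ≤ k) (hOcap : ∀ S ⊆ O, Cap3 S → S.card ≤ k)
    (hOru : NoRU O) (hI : InnerCfg k I)
    (hplace : ∀ o ∈ O, ∀ o' ∈ O, o ≠ o' → ∀ v ∈ I, ∀ v' ∈ I, v ≠ v' → xcr o o' < xcr v v')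
    (SA SB : Finset (Ln × Ln)) (hSA : SA ⊆ O ×ˢ I) (hSB : SB ⊆ O ×ˢ I)
    (hdisj : Disjoint SA SB) (hcard : (SA ∪ SB).card = 2 * k + 2) :
    ∀ᶠ ε : ℝ in nhdsWithin 0 (Set.Ioi 0),
      ¬ Flag (SA.image (emb ε)) (SB.image (emb ε)) := by
  by_contra hcon
  rw [Filter.not_eventually] at hcon
  simp only [not_not] at hcon
  have hSub : SA ∪ SB ⊆ O ×ˢ I := Finset.union_subset hSA hSB
  have hLwS : ∀ {p q : Ln × Ln}, idxLw SA SB p q → q ∈ SA ∪ SB := by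
    rintro p q (⟨h, _⟩ | ⟨h, _⟩)
    exacts [Finset.mem_union_left _ h, Finset.mem_union_right _ h]
  have hUpS : ∀ {p q : Ln × Ln}, idxUp SA SB p q → q ∈ SA ∪ SB := by
    rintro p q (⟨h, _⟩ | ⟨h, _⟩)
    exacts [Finset.mem_union_left _ h, Finset.mem_union_right _ h]
  have hLwUp_ne : ∀ {p q₁ q₂ : Ln × Ln}, idxLw SA SB p q₁ → idxUp SA SB p q₂ → q₁ ≠ q₂ := by
    rintro p q₁ q₂ h1 h2 rfl
    rcases h1 with ⟨hm, hs⟩ | ⟨hm, hs⟩ <;> rcases h2 with ⟨hm', hs'⟩ | ⟨hm', hs'⟩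
    · exact sOrd_asymm hs hs'
    · exact (Finset.disjoint_left.mp hdisj) hm hm'
    · exact (Finset.disjoint_left.mp hdisj) hm' hm
    · exact sOrd_asymm hs hs'
  have KEY : ∀ p ∈ SA ∪ SB, ∀ q₁ q₂ : Ln × Ln, idxLw SA SB p q₁ → idxUp SA SB p q₂ →
      ∃ᶠ ε in nhdsWithin 0 (Set.Ioi 0), 0 < ε ∧
        xcr (emb ε p) (emb ε q₁) < xcr (emb ε p) (emb ε q₂) := by
    intro p hp q₁ q₂ hq₁ hq₂
    refine ((hcon.and_eventually ((evord O I).and eventually_pos)).mono ?_)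
    rintro ε ⟨hflag, hord, hε⟩
    refine ⟨hε, ?_⟩
    have hmeml : emb ε p ∈ SA.image (emb ε) ∪ SB.image (emb ε) := by
      rw [← Finset.image_union]
      exact Finset.mem_image_of_mem _ hp
    have hmem1 : emb ε q₁ ∈ Lw (SA.image (emb ε)) (SB.image (emb ε)) (emb ε p) := by
      rcases hq₁ with ⟨h, hs⟩ | ⟨h, hs⟩
      · exact Finset.mem_union_left _ (Finset.mem_filter.mpr
          ⟨Finset.mem_image_of_mem _ h,
            hord q₁ (hSub (Finset.mem_union_left _ h)) p (hSub hp) hs⟩)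
      · exact Finset.mem_union_right _ (Finset.mem_filter.mpr
          ⟨Finset.mem_image_of_mem _ h,
            hord p (hSub hp) q₁ (hSub (Finset.mem_union_right _ h)) hs⟩)
    have hmem2 : emb ε q₂ ∈ Up (SA.image (emb ε)) (SB.image (emb ε)) (emb ε p) := by
      rcases hq₂ with ⟨h, hs⟩ | ⟨h, hs⟩
      · exact Finset.mem_union_left _ (Finset.mem_filter.mpr
          ⟨Finset.mem_image_of_mem _ h,
            hord p (hSub hp) q₂ (hSub (Finset.mem_union_left _ h)) hs⟩)
      · exact Finset.mem_union_right _ (Finset.mem_filter.mpr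
          ⟨Finset.mem_image_of_mem _ h,
            hord q₂ (hSub (Finset.mem_union_right _ h)) p (hSub hp) hs⟩)
    exact hflag _ hmeml _ hmem1 _ hmem2
  -- static facts
  have F1 : ∀ p ∈ SA ∪ SB, ∀ q₁ q₂ : Ln × Ln, idxLw SA SB p q₁ → idxUp SA SB p q₂ →
      q₁.1 = p.1 → q₂.1 = p.1 → xcr p.2 q₁.2 < xcr p.2 q₂.2 := by
    intro p hp q₁ q₂ hq₁ hq₂ he₁ he₂
    obtain ⟨ε, hε, hlt⟩ := (KEY p hp q₁ q₂ hq₁ hq₂).exists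
    have e1 : emb ε q₁ = emb ε (p.1, q₁.2) := by rw [← he₁]
    have e2 : emb ε q₂ = emb ε (p.1, q₂.2) := by rw [← he₂]
    rw [e1, e2, show p = (p.1, p.2) from rfl,
      xcr_emb_same ε (ne_of_gt hε) p.1 p.2 q₁.2,
      xcr_emb_same ε (ne_of_gt hε) p.1 p.2 q₂.2] at hlt
    exact hlt
  have F2 : ∀ p ∈ SA ∪ SB, ∀ q₁ q₂ : Ln × Ln, idxLw SA SB p q₁ → idxUp SA SB p q₂ →
      q₁.1 = p.1 → q₂.1 ≠ p.1 → False := by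
    intro p hp q₁ q₂ hq₁ hq₂ he₁ hne₂
    have hpOI := Finset.mem_product.mp (hSub hp)
    have hq₁OI := Finset.mem_product.mp (hSub (hLwS hq₁))
    have hq₂OI := Finset.mem_product.mp (hSub (hUpS hq₂))
    have hoo : p.1.1 ≠ q₂.1.1 := hOinj p.1 hpOI.1 q₂.1 hq₂OI.1 (fun h => hne₂ h.symm)
    have hf₁ : Filter.Tendsto (fun ε => xcr (emb ε p) (emb ε q₁))
        (nhdsWithin 0 (Set.Ioi 0)) (nhds (xcr p.2 q₁.2)) := by
      apply Filter.Tendsto.congr' _ (tendsto_const_nhds)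
      filter_upwards [eventually_pos] with ε hε
      have e1 : emb ε q₁ = emb ε (p.1, q₁.2) := by rw [← he₁]
      rw [e1, show p = (p.1, p.2) from rfl, xcr_emb_same ε (ne_of_gt hε) p.1 p.2 q₁.2]
    have hf₂ : Filter.Tendsto (fun ε => xcr (emb ε p) (emb ε q₂))
        (nhdsWithin 0 (Set.Ioi 0)) (nhds (xcr p.1 q₂.1)) :=
      tendsto_xcr_cross p.1 q₂.1 p.2 q₂.2 hoo
    have hle : xcr p.2 q₁.2 ≤ xcr p.1 q₂.1 :=
      freq_le hf₁ hf₂ ((KEY p hp q₁ q₂ hq₁ hq₂).mono (fun ε h => h.2))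
    -- placement contradiction
    have hv : p.2 ≠ q₁.2 := by
      rcases hq₁ with ⟨_, hs⟩ | ⟨_, hs⟩
      · rcases hs with h | ⟨_, h⟩
        · rw [he₁] at h; exact absurd h (lt_irrefl _)
        · exact fun hc => absurd h (by rw [hc]; exact lt_irrefl _)
      · rcases hs with h | ⟨_, h⟩
        · rw [he₁] at h; exact absurd h (lt_irrefl _)
        · exact fun hc => absurd h (by rw [hc]; exact lt_irrefl _)
    have := hplace p.1 hpOI.1 q₂.1 hq₂OI.1 (fun h => hne₂ h.symm) p.2 hpOI.2 q₁.2 hq₁OI.2 hv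
    linarith
  have F3 : ∀ p ∈ SA ∪ SB, ∀ q₁ q₂ : Ln × Ln, idxLw SA SB p q₁ → idxUp SA SB p q₂ →
      q₁.1 ≠ p.1 → q₂.1 ≠ p.1 → q₁.1 ≠ q₂.1 → xcr p.1 q₁.1 < xcr p.1 q₂.1 := by
    intro p hp q₁ q₂ hq₁ hq₂ hne₁ hne₂ hne₁₂
    have hpOI := Finset.mem_product.mp (hSub hp)
    have hq₁OI := Finset.mem_product.mp (hSub (hLwS hq₁))
    have hq₂OI := Finset.mem_product.mp (hSub (hUpS hq₂))
    have hoo₁ : p.1.1 ≠ q₁.1.1 := hOinj p.1 hpOI.1 q₁.1 hq₁OI.1 (fun h => hne₁ h.symm)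
    have hoo₂ : p.1.1 ≠ q₂.1.1 := hOinj p.1 hpOI.1 q₂.1 hq₂OI.1 (fun h => hne₂ h.symm)
    have hf₁ := tendsto_xcr_cross p.1 q₁.1 p.2 q₁.2 hoo₁
    have hf₂ := tendsto_xcr_cross p.1 q₂.1 p.2 q₂.2 hoo₂
    have hle : xcr p.1 q₁.1 ≤ xcr p.1 q₂.1 :=
      freq_le hf₁ hf₂ ((KEY p hp q₁ q₂ hq₁ hq₂).mono (fun ε h => h.2))
    exact lt_of_le_of_ne hle (hOconc p.1 hpOI.1 q₁.1 hq₁OI.1 q₂.1 hq₂OI.1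
      (fun h => hne₁ h.symm) (fun h => hne₂ h.symm) hne₁₂)
  have F4 : ∀ p ∈ SA ∪ SB, ∀ q₁ q₂ : Ln × Ln, idxLw SA SB p q₁ → idxUp SA SB p q₂ →
      q₁.1 ≠ p.1 → q₁.1 = q₂.1 → 0 < (p.1.1 - q₁.1.1) * (q₁.2.1 - q₂.2.1) := by
    intro p hp q₁ q₂ hq₁ hq₂ hne₁ he₁₂
    have hpOI := Finset.mem_product.mp (hSub hp)
    have hq₁OI := Finset.mem_product.mp (hSub (hLwS hq₁))
    have hq₂OI := Finset.mem_product.mp (hSub (hUpS hq₂))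
    have hoo : p.1.1 ≠ q₁.1.1 := hOinj p.1 hpOI.1 q₁.1 hq₁OI.1 (fun h => hne₁ h.symm)
    have hqq : q₁ ≠ q₂ := hLwUp_ne hq₁ hq₂
    have hv : q₁.2 ≠ q₂.2 := by
      intro h
      exact hqq (Prod.ext he₁₂ h)
    have hvs : q₁.2.1 ≠ q₂.2.1 := hI.inj q₁.2 hq₁OI.2 q₂.2 hq₂OI.2 hv
    have hE : p.1.1 - q₁.1.1 ≠ 0 := sub_ne_zero.mpr hoo
    have hs : q₁.2.1 - q₂.2.1 ≠ 0 := sub_ne_zero.mpr hvs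
    have hg : Filter.Tendsto
        (fun ε : ℝ => (xcr (emb ε p) (emb ε q₁) - xcr (emb ε p) (emb ε q₂)) / ε)
        (nhdsWithin 0 (Set.Ioi 0))
        (nhds (((q₁.1.2 - p.1.2) * (q₁.2.1 - q₂.2.1)
          + (p.1.1 - q₁.1.1) * (q₁.2.2 - q₂.2.2))
          / ((p.1.1 - q₁.1.1) * (p.1.1 - q₁.1.1)))) := by
      have h0 := tendsto_xcr_so p.1 q₁.1 p.2 q₁.2 q₂.2 hoo
      apply h0.congr
      intro ε
      rw [show ((q₁.1, q₂.2) : Ln × Ln) = q₂ from by rw [he₁₂]]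
    have hfr : ∃ᶠ ε in nhdsWithin 0 (Set.Ioi 0),
        (xcr (emb ε p) (emb ε q₁) - xcr (emb ε p) (emb ε q₂)) / ε < 0 := by
      refine (KEY p hp q₁ q₂ hq₁ hq₂).mono ?_
      rintro ε ⟨hε, hlt⟩
      exact div_neg_of_neg_of_pos (by linarith) hε
    have hle := freq_le hg tendsto_const_nhds hfr
    have hE2 : 0 < (p.1.1 - q₁.1.1) * (p.1.1 - q₁.1.1) := mul_self_pos.mpr hE
    have hK : (q₁.1.2 - p.1.2) * (q₁.2.1 - q₂.2.1)
        + (p.1.1 - q₁.1.1) * (q₁.2.2 - q₂.2.2) ≤ 0 := by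
      have h := mul_le_mul_of_nonneg_right hle (le_of_lt hE2)
      rwa [div_mul_cancel₀ _ (ne_of_gt hE2), zero_mul] at h
    have hpl : xcr p.1 q₁.1 < xcr q₁.2 q₂.2 :=
      hplace p.1 hpOI.1 q₁.1 hq₁OI.1 (fun h => hne₁ h.symm) q₁.2 hq₁OI.2 q₂.2 hq₂OI.2 hv
    have hId : (q₁.1.2 - p.1.2) * (q₁.2.1 - q₂.2.1) + (p.1.1 - q₁.1.1) * (q₁.2.2 - q₂.2.2)
        = (p.1.1 - q₁.1.1) * (q₁.2.1 - q₂.2.1) * (xcr p.1 q₁.1 - xcr q₁.2 q₂.2) := by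
      rw [xcr, xcr]
      field_simp
      ring
    by_contra hcon2
    push_neg at hcon2
    have hne0 : (p.1.1 - q₁.1.1) * (q₁.2.1 - q₂.2.1) ≠ 0 := mul_ne_zero hE hs
    have hlt0 : (p.1.1 - q₁.1.1) * (q₁.2.1 - q₂.2.1) < 0 := lt_of_le_of_ne hcon2 hne0
    nlinarith [mul_pos_of_neg_of_neg hlt0 (sub_neg.mpr hpl)]
  exact absurd hcard (static_main hk hOinj hOconc hOcup hOcap hOru hI hSA hSB hdisj F1 F2 F3 F4)

def shear (T : ℝ) (l : Ln) : Ln := (l.1, l.2 + T * l.1)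

lemma shear_inj (T : ℝ) : Function.Injective (shear T) := by
  intro l m h
  simp only [shear, Prod.mk.injEq] at h
  refine Prod.ext h.1 ?_
  have := h.2
  rw [h.1] at this
  linarith

lemma shear_slope (T : ℝ) (l m : Ln) : l.1 < m.1 ↔ (shear T l).1 < (shear T m).1 := Iff.rfl

lemma shear_xcr (T : ℝ) (l m : Ln) (h : l.1 ≠ m.1) :
    xcr (shear T l) (shear T m) = xcr l m + (-T) := by
  have hne : l.1 - m.1 ≠ 0 := sub_ne_zero.mpr h
  rw [xcr, xcr]
  show (m.2 + T * m.1 - (l.2 + T * l.1)) / (l.1 - m.1) = _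
  field_simp
  ring

lemma evinj {O I : Finset Ln} (hOinj : SlopeInj O) (hIinj : SlopeInj I) :
    ∀ᶠ ε : ℝ in nhdsWithin 0 (Set.Ioi 0),
      ∀ pp ∈ O ×ˢ I, ∀ qq ∈ O ×ˢ I, pp ≠ qq → (emb ε pp).1 ≠ (emb ε qq).1 := by
  refine (evord O I).mono (fun ε hord pp hpp qq hqq hne => ?_)
  rcases sOrd_total hOinj hIinj hpp hqq hne with h | h
  · exact ne_of_lt (hord pp hpp qq hqq h)
  · exact ne_of_gt (hord qq hqq pp hpp h)

lemma evconc {O I : Finset Ln} (hOinj : SlopeInj O) (hOconc : NoConc O) (hI : InnerCfg k I)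
    (hplace : ∀ o ∈ O, ∀ o' ∈ O, o ≠ o' → ∀ v ∈ I, ∀ v' ∈ I, v ≠ v' → xcr o o' < xcr v v') :
    ∀ᶠ ε : ℝ in nhdsWithin 0 (Set.Ioi 0),
      ∀ pp ∈ O ×ˢ I, ∀ qq ∈ O ×ˢ I, ∀ rr ∈ O ×ˢ I,
        pp ≠ qq → pp ≠ rr → qq ≠ rr →
        xcr (emb ε pp) (emb ε qq) ≠ xcr (emb ε pp) (emb ε rr) := by
  rw [Filter.eventually_all_finset]
  intro pp hpp
  rw [Filter.eventually_all_finset]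
  intro qq hqq
  rw [Filter.eventually_all_finset]
  intro rr hrr
  obtain ⟨hppO, hppI⟩ := Finset.mem_product.mp hpp
  obtain ⟨hqqO, hqqI⟩ := Finset.mem_product.mp hqq
  obtain ⟨hrrO, hrrI⟩ := Finset.mem_product.mp hrr
  by_cases h1 : pp ≠ qq
  on_goal 2 => exact Filter.Eventually.of_forall (fun ε h => absurd h1 (fun hc => hc h))
  by_cases h2 : pp ≠ rr
  on_goal 2 => exact Filter.Eventually.of_forall (fun ε _ h => absurd h2 (fun hc => hc h))
  by_cases h3 : qq ≠ rr
  on_goal 2 => exact Filter.Eventually.of_forall (fun ε _ _ h => absurd h3 (fun hc => hc h))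
  by_cases e1 : qq.1 = pp.1 <;> by_cases e2 : rr.1 = pp.1
  · -- both in the cluster of pp
    have hsq : pp.2 ≠ qq.2 := fun h => h1 (Prod.ext e1.symm h)
    have hsr : pp.2 ≠ rr.2 := fun h => h2 (Prod.ext e2.symm h)
    have hqr : qq.2 ≠ rr.2 := fun h => h3 (Prod.ext (e1.trans e2.symm) h)
    refine eventually_pos.mono (fun ε hε _ _ _ => ?_)
    have hq' : emb ε qq = emb ε (pp.1, qq.2) := by rw [← e1]
    have hr' : emb ε rr = emb ε (pp.1, rr.2) := by rw [← e2]
    rw [hq', hr', show pp = (pp.1, pp.2) from rfl,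
      xcr_emb_same ε (ne_of_gt hε) pp.1 pp.2 qq.2,
      xcr_emb_same ε (ne_of_gt hε) pp.1 pp.2 rr.2]
    exact hI.noconc pp.2 hppI qq.2 hqqI rr.2 hrrI hsq hsr hqr
  · -- qq in the cluster, rr outside
    have hsq : pp.2 ≠ qq.2 := fun h => h1 (Prod.ext e1.symm h)
    have hoo : pp.1.1 ≠ rr.1.1 := hOinj pp.1 hppO rr.1 hrrO (fun h => e2 h.symm)
    have hf₂ := tendsto_xcr_cross pp.1 rr.1 pp.2 rr.2 hoo
    have hpl : xcr pp.1 rr.1 < xcr pp.2 qq.2 :=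
      hplace pp.1 hppO rr.1 hrrO (fun h => e2 h.symm) pp.2 hppI qq.2 hqqI hsq
    filter_upwards [eventually_pos, hf₂.eventually_ne (ne_of_lt hpl)] with ε hε hne _ _ _
    have hq' : emb ε qq = emb ε (pp.1, qq.2) := by rw [← e1]
    rw [hq', show pp = (pp.1, pp.2) from rfl, xcr_emb_same ε (ne_of_gt hε) pp.1 pp.2 qq.2]
    exact fun hc => hne hc.symm
  · -- rr in the cluster, qq outside
    have hsr : pp.2 ≠ rr.2 := fun h => h2 (Prod.ext e2.symm h)
    have hoo : pp.1.1 ≠ qq.1.1 := hOinj pp.1 hppO qq.1 hqqO (fun h => e1 h.symm)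
    have hf₁ := tendsto_xcr_cross pp.1 qq.1 pp.2 qq.2 hoo
    have hpl : xcr pp.1 qq.1 < xcr pp.2 rr.2 :=
      hplace pp.1 hppO qq.1 hqqO (fun h => e1 h.symm) pp.2 hppI rr.2 hrrI hsr
    filter_upwards [eventually_pos, hf₁.eventually_ne (ne_of_lt hpl)] with ε hε hne _ _ _
    have hr' : emb ε rr = emb ε (pp.1, rr.2) := by rw [← e2]
    rw [hr', show pp = (pp.1, pp.2) from rfl, xcr_emb_same ε (ne_of_gt hε) pp.1 pp.2 rr.2]
    exact hne
  · -- both outside the cluster of pp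
    by_cases e3 : qq.1 = rr.1
    · -- same other cluster : second order
      have hoo : pp.1.1 ≠ qq.1.1 := hOinj pp.1 hppO qq.1 hqqO (fun h => e1 h.symm)
      have hqr : qq.2 ≠ rr.2 := fun h => h3 (Prod.ext e3 h)
      have hs : qq.2.1 - rr.2.1 ≠ 0 :=
        sub_ne_zero.mpr (hI.inj qq.2 hqqI rr.2 hrrI hqr)
      have hE : pp.1.1 - qq.1.1 ≠ 0 := sub_ne_zero.mpr hoo
      have hpl : xcr pp.1 qq.1 < xcr qq.2 rr.2 :=
        hplace pp.1 hppO qq.1 hqqO (fun h => e1 h.symm) qq.2 hqqI rr.2 hrrI hqr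
      have hg : Filter.Tendsto
          (fun ε : ℝ => (xcr (emb ε pp) (emb ε qq) - xcr (emb ε pp) (emb ε rr)) / ε)
          (nhdsWithin 0 (Set.Ioi 0))
          (nhds (((qq.1.2 - pp.1.2) * (qq.2.1 - rr.2.1)
            + (pp.1.1 - qq.1.1) * (qq.2.2 - rr.2.2))
            / ((pp.1.1 - qq.1.1) * (pp.1.1 - qq.1.1)))) := by
        have h0 := tendsto_xcr_so pp.1 qq.1 pp.2 qq.2 rr.2 hoo
        apply h0.congr
        intro ε
        rw [show ((qq.1, rr.2) : Ln × Ln) = rr from by rw [e3]]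
      have hId : (qq.1.2 - pp.1.2) * (qq.2.1 - rr.2.1) + (pp.1.1 - qq.1.1) * (qq.2.2 - rr.2.2)
          = (pp.1.1 - qq.1.1) * (qq.2.1 - rr.2.1) * (xcr pp.1 qq.1 - xcr qq.2 rr.2) := by
        rw [xcr, xcr]
        field_simp
        ring
      have hKne : (qq.1.2 - pp.1.2) * (qq.2.1 - rr.2.1)
          + (pp.1.1 - qq.1.1) * (qq.2.2 - rr.2.2) ≠ 0 := by
        rw [hId]
        exact mul_ne_zero (mul_ne_zero hE hs) (sub_ne_zero.mpr (ne_of_lt hpl))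
      have hE2 : (pp.1.1 - qq.1.1) * (pp.1.1 - qq.1.1) ≠ 0 := mul_ne_zero hE hE
      filter_upwards [eventually_pos, hg.eventually_ne (div_ne_zero hKne hE2)]
        with ε hε hgn _ _ _
      intro hc
      apply hgn
      rw [hc, sub_self, zero_div]
    · -- three distinct clusters
      have hoo₁ : pp.1.1 ≠ qq.1.1 := hOinj pp.1 hppO qq.1 hqqO (fun h => e1 h.symm)
      have hoo₂ : pp.1.1 ≠ rr.1.1 := hOinj pp.1 hppO rr.1 hrrO (fun h => e2 h.symm)
      have hf₁ := tendsto_xcr_cross pp.1 qq.1 pp.2 qq.2 hoo₁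
      have hf₂ := tendsto_xcr_cross pp.1 rr.1 pp.2 rr.2 hoo₂
      have hX : xcr pp.1 qq.1 ≠ xcr pp.1 rr.1 :=
        hOconc pp.1 hppO qq.1 hqqO rr.1 hrrO (fun h => e1 h.symm) (fun h => e2 h.symm)
          (fun h => e3 (by rw [h]))
      filter_upwards [(hf₁.sub hf₂).eventually_ne (sub_ne_zero.mpr hX)] with ε hne _ _ _
      exact sub_ne_zero.mp hne

set_option maxHeartbeats 4000000 in
theorem comb_exists (k : ℕ) (hk : 2 ≤ k) :
    ∃ F : Finset Ln, SlopeInj F ∧ NoConc F ∧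
      F.card = (Nat.choose (2 * k - 2) (k - 1)) ^ 2 ∧
      ∀ A B : Finset Ln, A ⊆ F → B ⊆ F → Disjoint A B → (A ∪ B).card = 2 * k + 2 →
        ¬ Flag A B := by
  classical
  have hk1 : 1 ≤ k := by omega
  obtain ⟨H₀, hH₀⟩ := goodcfg_exists k k hk1 hk1
  obtain ⟨I, hI⟩ : ∃ I, InnerCfg k I := ⟨_, inner_of_good hH₀⟩
  obtain ⟨H₁, hH₁⟩ := goodcfg_exists k k hk1 hk1
  obtain ⟨T, hT⟩ : ∃ T : ℝ, ∀ pr ∈ (H₁ ×ˢ H₁) ×ˢ (I ×ˢ I),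
      xcr pr.1.1 pr.1.2 - xcr pr.2.1 pr.2.2 < T := by
    set V : Finset ℝ := ((H₁ ×ˢ H₁) ×ˢ (I ×ˢ I)).image
      (fun w => xcr w.1.1 w.1.2 - xcr w.2.1 w.2.2) with hVdef
    rcases V.eq_empty_or_nonempty with h | h
    · refine ⟨0, fun pr hpr => ?_⟩
      exfalso
      have hm : xcr pr.1.1 pr.1.2 - xcr pr.2.1 pr.2.2 ∈ V := by
        rw [hVdef]
        exact Finset.mem_image_of_mem (fun w => xcr w.1.1 w.1.2 - xcr w.2.1 w.2.2) hpr
      rw [h] at hm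
      exact Finset.notMem_empty _ hm
    · refine ⟨V.max' h + 1, fun pr hpr => ?_⟩
      have hm : xcr pr.1.1 pr.1.2 - xcr pr.2.1 pr.2.2 ∈ V := by
        rw [hVdef]
        exact Finset.mem_image_of_mem (fun w => xcr w.1.1 w.1.2 - xcr w.2.1 w.2.2) hpr
      exact lt_of_le_of_lt (V.le_max' _ hm) (lt_add_one _)
  obtain ⟨O, hO, hplace⟩ : ∃ O, GoodCfg k k O ∧
      (∀ o ∈ O, ∀ o' ∈ O, o ≠ o' → ∀ v ∈ I, ∀ v' ∈ I, v ≠ v' → xcr o o' < xcr v v') := by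
    refine ⟨H₁.image (shear T), goodcfg_transport (shear T) (-T) (shear_inj T)
      (shear_slope T) (fun l m h => shear_xcr T l m h) hH₁, ?_⟩
    intro o ho o' ho' hne v hv v' hv' hvne
    obtain ⟨o₀, ho₀, rfl⟩ := Finset.mem_image.mp ho
    obtain ⟨o₀', ho₀', rfl⟩ := Finset.mem_image.mp ho'
    have hne0 : o₀ ≠ o₀' := fun h => hne (by rw [h])
    have hs0 : o₀.1 ≠ o₀'.1 := hH₁.inj o₀ ho₀ o₀' ho₀' hne0
    rw [shear_xcr T o₀ o₀' hs0]
    have hx : ((o₀, o₀'), (v, v')) ∈ (H₁ ×ˢ H₁) ×ˢ (I ×ˢ I) :=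
      Finset.mem_product.mpr ⟨Finset.mem_product.mpr ⟨ho₀, ho₀'⟩,
        Finset.mem_product.mpr ⟨hv, hv'⟩⟩
    have h5 := hT ((o₀, o₀'), (v, v')) hx
    simp only at h5
    linarith
  have E1 := evinj hO.inj hI.inj
  have E2 := evconc hO.inj hO.noconc hI hplace
  have E3 : ∀ᶠ ε : ℝ in nhdsWithin 0 (Set.Ioi 0),
      ∀ SA ∈ (O ×ˢ I).powerset, ∀ SB ∈ (O ×ˢ I).powerset,
        Disjoint SA SB → (SA ∪ SB).card = 2 * k + 2 →
        ¬ Flag (SA.image (emb ε)) (SB.image (emb ε)) := by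
    rw [Filter.eventually_all_finset]
    intro SA hSA
    rw [Filter.eventually_all_finset]
    intro SB hSB
    by_cases hd : Disjoint SA SB
    · by_cases hc : (SA ∪ SB).card = 2 * k + 2
      · exact (candidate_kill hk1 hO.inj hO.noconc hO.nocup hO.nocap hO.noru hI hplace
          SA SB (Finset.mem_powerset.mp hSA) (Finset.mem_powerset.mp hSB) hd hc).mono
          (fun ε h _ _ => h)
      · exact Filter.Eventually.of_forall (fun ε _ h => absurd h hc)
    · exact Filter.Eventually.of_forall (fun ε h => absurd h hd)
  obtain ⟨ε, hεinj, hεconc, hεflag⟩ := (E1.and (E2.and E3)).exists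
  have hinjOn : Set.InjOn (emb ε) ↑(O ×ˢ I) := by
    intro pp hpp qq hqq h
    by_contra hne
    exact hεinj pp (by exact_mod_cast hpp) qq (by exact_mod_cast hqq) hne
      (congrArg Prod.fst h)
  refine ⟨(O ×ˢ I).image (emb ε), ?_, ?_, ?_, ?_⟩
  · intro l hl m hm hne
    obtain ⟨pp, hpp, rfl⟩ := Finset.mem_image.mp hl
    obtain ⟨qq, hqq, rfl⟩ := Finset.mem_image.mp hm
    exact hεinj pp hpp qq hqq (fun h => hne (by rw [h]))
  · intro l hl m hm m' hm' h1 h2 h3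
    obtain ⟨pp, hpp, rfl⟩ := Finset.mem_image.mp hl
    obtain ⟨qq, hqq, rfl⟩ := Finset.mem_image.mp hm
    obtain ⟨rr, hrr, rfl⟩ := Finset.mem_image.mp hm'
    exact hεconc pp hpp qq hqq rr hrr (fun h => h1 (by rw [h])) (fun h => h2 (by rw [h]))
      (fun h => h3 (by rw [h]))
  · rw [Finset.card_image_of_injOn hinjOn, Finset.card_product, hO.card, hI.card,
      show k + k - 2 = 2 * k - 2 by omega, pow_two]
  · intro A B hA hB hdisjAB hcardAB
    set SA := (O ×ˢ I).filter (fun pp => emb ε pp ∈ A) with hSAdef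
    set SB := (O ×ˢ I).filter (fun pp => emb ε pp ∈ B) with hSBdef
    have hSAim : SA.image (emb ε) = A := by
      ext a
      simp only [hSAdef, Finset.mem_image, Finset.mem_filter]
      constructor
      · rintro ⟨pp, ⟨_, hp⟩, rfl⟩
        exact hp
      · intro ha
        obtain ⟨pp, hpp, rfl⟩ := Finset.mem_image.mp (hA ha)
        exact ⟨pp, ⟨hpp, ha⟩, rfl⟩
    have hSBim : SB.image (emb ε) = B := by
      ext a
      simp only [hSBdef, Finset.mem_image, Finset.mem_filter]
      constructor
      · rintro ⟨pp, ⟨_, hp⟩, rfl⟩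
        exact hp
      · intro ha
        obtain ⟨pp, hpp, rfl⟩ := Finset.mem_image.mp (hB ha)
        exact ⟨pp, ⟨hpp, ha⟩, rfl⟩
    have hdisj' : Disjoint SA SB := by
      rw [Finset.disjoint_left]
      intro pp h1 h2
      rw [hSAdef, Finset.mem_filter] at h1
      rw [hSBdef, Finset.mem_filter] at h2
      exact (Finset.disjoint_left.mp hdisjAB) h1.2 h2.2
    have hcard' : (SA ∪ SB).card = 2 * k + 2 := by
      have hsub : SA ∪ SB ⊆ O ×ˢ I :=
        Finset.union_subset (Finset.filter_subset _ _) (Finset.filter_subset _ _)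
      have hcc : ((SA ∪ SB).image (emb ε)).card = (SA ∪ SB).card :=
        Finset.card_image_of_injOn (hinjOn.mono (by exact_mod_cast hsub))
      rw [Finset.image_union, hSAim, hSBim] at hcc
      rw [← hcc, hcardAB]
    have hfin := hεflag SA (Finset.mem_powerset.mpr (Finset.filter_subset _ _))
      SB (Finset.mem_powerset.mpr (Finset.filter_subset _ _)) hdisj' hcard'
    rwa [hSAim, hSBim] at hfin

lemma cont_lin (l : Ln) : Continuous (fun q : Ln => l.1 * q.1 + l.2) :=
  (continuous_const.mul continuous_fst).add continuous_const

/-- a preconnected set avoiding a line lies (weakly, after closure) on one side,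
the side determined by any of its points. -/
lemma preconn_side {P : Set (ℝ × ℝ)} (hP : IsPreconnected P) (l : Ln)
    (hno : ∀ z ∈ P, z.2 ≠ l.1 * z.1 + l.2) {p₀ : ℝ × ℝ} (hp₀ : p₀ ∈ P) :
    (l.1 * p₀.1 + l.2 < p₀.2 → ∀ z ∈ closure P, l.1 * z.1 + l.2 ≤ z.2) ∧
    (p₀.2 < l.1 * p₀.1 + l.2 → ∀ z ∈ closure P, z.2 ≤ l.1 * z.1 + l.2) := by
  set U : Set (ℝ × ℝ) := {q | l.1 * q.1 + l.2 < q.2} with hU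
  set V : Set (ℝ × ℝ) := {q | q.2 < l.1 * q.1 + l.2} with hV
  have hopU : IsOpen U := isOpen_lt (cont_lin l) continuous_snd
  have hopV : IsOpen V := isOpen_lt continuous_snd (cont_lin l)
  have hdisj : Disjoint U V := by
    rw [Set.disjoint_left]
    intro q h1 h2
    simp only [hU, hV, Set.mem_setOf_eq] at h1 h2
    exact absurd (lt_trans h1 h2) (lt_irrefl _)
  have hsub : P ⊆ U ∪ V := by
    intro z hz
    rcases lt_or_gt_of_ne (hno z hz) with h | h
    · exact Or.inr h
    · exact Or.inl h
  rcases hP.subset_or_subset hopU hopV hdisj hsub with hside | hside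
  · constructor
    · intro _ z hz
      have hcl : closure P ⊆ {q : ℝ × ℝ | l.1 * q.1 + l.2 ≤ q.2} :=
        closure_minimal (fun w hw => by
            simp only [Set.mem_setOf_eq]
            exact le_of_lt (hside hw))
          (isClosed_le (cont_lin l) continuous_snd)
      exact hcl hz
    · intro h
      exact absurd (hside hp₀) (not_lt.mpr (le_of_lt h))
  · constructor
    · intro h
      exact absurd (hside hp₀) (not_lt.mpr (le_of_lt h))
    · intro _ z hz
      have hcl : closure P ⊆ {q : ℝ × ℝ | q.2 ≤ l.1 * q.1 + l.2} :=
        closure_minimal (fun w hw => by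
            simp only [Set.mem_setOf_eq]
            exact le_of_lt (hside hw))
          (isClosed_le continuous_snd (cont_lin l))
      exact hcl hz

theorem convexpos_flag (G : Finset Ln) (h : ConvexPos G) :
    ∃ A B : Finset Ln, Disjoint A B ∧ A ∪ B = G ∧ Flag A B := by
  obtain ⟨P, ⟨⟨p₀, hp₀, hPeq⟩, hcon⟩⟩ := h
  have hp₀P : p₀ ∈ P := by rw [hPeq]; exact mem_connectedComponentIn hp₀
  have hPC : P ⊆ (linesUnion G)ᶜ := by rw [hPeq]; exact connectedComponentIn_subset _ _
  have hPpre : IsPreconnected P := by rw [hPeq]; exact isPreconnected_connectedComponentIn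
  have hnotline : ∀ l ∈ G, ∀ z ∈ P, z.2 ≠ l.1 * z.1 + l.2 := by
    intro l hl z hz heq
    exact hPC hz (mem_biUnion hl (by exact heq))
  refine ⟨G.filter (fun l => l.1 * p₀.1 + l.2 < p₀.2),
         G.filter (fun l => p₀.2 < l.1 * p₀.1 + l.2), ?_, ?_, ?_⟩
  · rw [Finset.disjoint_left]
    intro l hl hl'
    rw [Finset.mem_filter] at hl hl'
    exact absurd (lt_trans hl.2 hl'.2) (lt_irrefl _)
  · ext l
    simp only [Finset.mem_union, Finset.mem_filter]
    constructor
    · rintro (⟨h, _⟩ | ⟨h, _⟩) <;> exact h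
    · intro hl
      rcases lt_or_gt_of_ne (hnotline l hl p₀ hp₀P) with hlt | hgt
      · exact Or.inr ⟨hl, hlt⟩
      · exact Or.inl ⟨hl, hgt⟩
  · set A := G.filter (fun l => l.1 * p₀.1 + l.2 < p₀.2) with hA
    set B := G.filter (fun l => p₀.2 < l.1 * p₀.1 + l.2) with hB
    have sideA : ∀ l ∈ A, ∀ z ∈ closure P, l.1 * z.1 + l.2 ≤ z.2 := by
      intro l hl
      rw [hA, Finset.mem_filter] at hl
      exact (preconn_side hPpre l (hnotline l hl.1) hp₀P).1 hl.2
    have sideB : ∀ l ∈ B, ∀ z ∈ closure P, z.2 ≤ l.1 * z.1 + l.2 := by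
      intro l hl
      rw [hB, Finset.mem_filter] at hl
      exact (preconn_side hPpre l (hnotline l hl.1) hp₀P).2 hl.2
    intro l hl m₁ hm₁ m₂ hm₂
    have hlG : l ∈ G := by
      rcases Finset.mem_union.mp hl with h | h
      · exact (Finset.mem_filter.mp h).1
      · exact (Finset.mem_filter.mp h).1
    obtain ⟨p, q, hpq, ⟨hpcl, hpln⟩, ⟨hqcl, hqln⟩⟩ := hcon l hlG
    rw [lineSet, Set.mem_setOf_eq] at hpln hqln
    have hx : p.1 ≠ q.1 := by
      intro hxx
      exact hpq (Prod.ext hxx (by rw [hpln, hqln, hxx]))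
    have keyLow : ∀ z : ℝ × ℝ, z ∈ closure P → z.2 = l.1 * z.1 + l.2 → xcr l m₁ ≤ z.1 := by
      intro z hzc hzl
      rcases Finset.mem_union.mp hm₁ with hm | hm
      · rw [Finset.mem_filter] at hm
        have h1 : m₁.1 * z.1 + m₁.2 ≤ z.2 := sideA m₁ hm.1 z hzc
        rw [hzl] at h1
        have hden : (0:ℝ) < l.1 - m₁.1 := by linarith [hm.2]
        rw [xcr, div_le_iff₀ hden]
        nlinarith
      · rw [Finset.mem_filter] at hm
        have h1 : z.2 ≤ m₁.1 * z.1 + m₁.2 := sideB m₁ hm.1 z hzc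
        rw [hzl] at h1
        have hden : l.1 - m₁.1 < 0 := by linarith [hm.2]
        rw [xcr, div_le_iff_of_neg hden]
        nlinarith
    have keyUp : ∀ z : ℝ × ℝ, z ∈ closure P → z.2 = l.1 * z.1 + l.2 → z.1 ≤ xcr l m₂ := by
      intro z hzc hzl
      rcases Finset.mem_union.mp hm₂ with hm | hm
      · rw [Finset.mem_filter] at hm
        have h1 : m₂.1 * z.1 + m₂.2 ≤ z.2 := sideA m₂ hm.1 z hzc
        rw [hzl] at h1
        have hden : l.1 - m₂.1 < 0 := by linarith [hm.2]
        rw [xcr, le_div_iff_of_neg hden]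
        nlinarith
      · rw [Finset.mem_filter] at hm
        have h1 : z.2 ≤ m₂.1 * z.1 + m₂.2 := sideB m₂ hm.1 z hzc
        rw [hzl] at h1
        have hden : (0:ℝ) < l.1 - m₂.1 := by linarith [hm.2]
        rw [xcr, le_div_iff₀ hden]
        nlinarith
    rcases lt_or_gt_of_ne hx with hlt | hgt
    · calc xcr l m₁ ≤ p.1 := keyLow p hpcl hpln
        _ < q.1 := hlt
        _ ≤ xcr l m₂ := keyUp q hqcl hqln
    · calc xcr l m₁ ≤ q.1 := keyLow q hqcl hqln
        _ < p.1 := hgt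
        _ ≤ xcr l m₂ := keyUp p hpcl hpln



end
end S12

/-- For n = 2k + 2 ≥ 5 there is a family of C(2k-2, k-1)² (which is Θ(4ⁿ/n)) lines
in general position containing no n lines in convex position. -/
theorem stmt12 (n k : ℕ) (hnk : n = 2 * k + 2) (hn : 5 ≤ n) :
    ∃ F : Finset (ℝ × ℝ), GenPos F ∧ F.card = (Nat.choose (2 * k - 2) (k - 1)) ^ 2 ∧
      ¬ ∃ G ⊆ F, G.card = n ∧ ConvexPos G := by
  have hk : 2 ≤ k := by omega
  obtain ⟨F, hinj, hconc, hcard, hflag⟩ := S12.comb_exists k hk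
  refine ⟨F, ⟨fun l₁ h₁ l₂ h₂ hne => hinj l₁ h₁ l₂ h₂ hne, ?_⟩, hcard, ?_⟩
  · intro l₁ h₁ l₂ h₂ l₃ h₃ h12 h13 h23
    rintro ⟨p, hp1, hp2, hp3⟩
    rw [lineSet, Set.mem_setOf_eq] at hp1 hp2 hp3
    have hs12 : l₁.1 ≠ l₂.1 := hinj l₁ h₁ l₂ h₂ h12
    have hs13 : l₁.1 ≠ l₃.1 := hinj l₁ h₁ l₃ h₃ h13
    have e2 : p.1 = S12.xcr l₁ l₂ := by
      rw [S12.xcr, eq_div_iff (sub_ne_zero.mpr hs12)]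
      nlinarith [hp1, hp2]
    have e3 : p.1 = S12.xcr l₁ l₃ := by
      rw [S12.xcr, eq_div_iff (sub_ne_zero.mpr hs13)]
      nlinarith [hp1, hp3]
    exact hconc l₁ h₁ l₂ h₂ l₃ h₃ h12 h13 h23 (by rw [← e2, ← e3])
  · rintro ⟨G, hGF, hGcard, hGconv⟩
    obtain ⟨A, B, hdisj, hunion, hFlag⟩ := S12.convexpos_flag G hGconv
    refine hflag A B ?_ ?_ hdisj ?_ hFlag
    · exact fun x hx => hGF (hunion ▸ Finset.mem_union_left B hx)
    · exact fun x hx => hGF (hunion ▸ Finset.mem_union_right A hx)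
    · rw [hunion, hGcard, hnk]
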